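/- arXiv:1510.05774 — 7 statements merged into one kernel-verified Lean document; each statement's English description precedes it below -/
import Mathlib

section
/- Let A be an arena with recharge weight function w, cap ∈ ℕ, and t ∈ ℕ. If Player 0 wins the average-bounded recharge game (A, AvgRecharge(w, cap, t)), then she has a winning strategy for this game that is finite-state of size cap + 2, i.e., implemented by a memory structure with cap + 2 states. -/
/-- An arena: a directed graph without terminal vertices, a set `V0` of Player 0's
vertices (Player 1 controls the complement), and an initial vertex. -/
structure Arena (V : Type) where
  V0 : Set V
  E : V → V → Prop
  vI : V
  succ : ∀ v, ∃ v', E v v'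

/-- A play: an infinite path starting in the initial vertex. -/
def Arena.Play {V : Type} (A : Arena V) (ρ : ℕ → V) : Prop :=
  ρ 0 = A.vI ∧ ∀ n, A.E (ρ n) (ρ (n + 1))

/-- The play prefix `ρ 0 ⋯ ρ n` as a list. -/
def prefixList {V : Type} (ρ : ℕ → V) (n : ℕ) : List V :=
  (List.range (n + 1)).map ρ

/-- A strategy for the player controlling the vertices in `p`. -/
def Arena.IsStrategy {V : Type} (A : Arena V) (p : Set V) (σ : List V → V) : Prop :=
  ∀ (h : List V) (v : V), v ∈ p → A.E v (σ (h ++ [v]))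

/-- Consistency of a play with a strategy of the player controlling `p`. -/
def Arena.ConsistentWith {V : Type} (A : Arena V) (p : Set V) (σ : List V → V) (ρ : ℕ → V) : Prop :=
  ∀ n, ρ n ∈ p → ρ (n + 1) = σ (prefixList ρ n)

/-- `σ` is a winning strategy for the player controlling `p` with objective `Obj`. -/
def Arena.WinningStrategy {V : Type} (A : Arena V) (p : Set V) (Obj : Set (ℕ → V))
    (σ : List V → V) : Prop :=
  A.IsStrategy p σ ∧ ∀ ρ, A.Play ρ → A.ConsistentWith p σ ρ → ρ ∈ Obj

/-- Player 0 wins the game `(A, Win)`. -/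
def Arena.Player0Wins {V : Type} (A : Arena V) (Win : Set (ℕ → V)) : Prop :=
  ∃ σ, A.WinningStrategy A.V0 Win σ

/-- `h` is a finite play prefix consistent with the strategy `σ` of the player controlling `p`. -/
def Arena.FinPrefix {V : Type} (A : Arena V) (p : Set V) (σ : List V → V) (h : List V) : Prop :=
  ∃ ρ n, A.Play ρ ∧ A.ConsistentWith p σ ρ ∧ h = prefixList ρ n

/-- A positional strategy only depends on the last vertex. -/
def Positional {X : Type} (σ : List X → X) : Prop :=
  ∀ (h : List X) (v : X), σ (h ++ [v]) = σ [v]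

/-- The energy level of the play prefix `ρ 0 ⋯ ρ n` is `EL w ρ n`:
the sum of the weights of its `n` edges. -/
def EL {V : Type} (w : V → V → ℤ) (ρ : ℕ → V) (n : ℕ) : ℤ :=
  ∑ i ∈ Finset.range n, w (ρ i) (ρ (i + 1))

/-- The energy level of a finite play prefix given as a list. -/
def ELl {V : Type} (w : V → V → ℤ) : List V → ℤ
  | [] => 0
  | [_] => 0
  | a :: b :: l => w a b + ELl w (b :: l)

/-- The average accumulated energy of the first `n` prefixes. -/
noncomputable def avgEL {V : Type} (w : V → V → ℤ) (ρ : ℕ → V) (n : ℕ) : ℝ :=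
  (∑ i ∈ Finset.range n, (EL w ρ i : ℝ)) / (n : ℝ)

/-- The lower-bounded energy objective. -/
def EnergyL {V : Type} (w : V → V → ℤ) : Set (ℕ → V) :=
  {ρ | ∀ n, 0 ≤ EL w ρ n}

/-- The lower- and upper-bounded energy objective. -/
def EnergyLU {V : Type} (w : V → V → ℤ) (cap : ℕ) : Set (ℕ → V) :=
  {ρ | ∀ n, 0 ≤ EL w ρ n ∧ EL w ρ n ≤ (cap : ℤ)}

/-- The average-energy objective: limsup of the averages is at most `t`. -/
def AvgE {V : Type} (w : V → V → ℤ) (t : ℝ) : Set (ℕ → V) :=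
  {ρ | Filter.limsup (fun n => (avgEL w ρ n : EReal)) Filter.atTop ≤ (t : EReal)}

/-- The lower-bounded average-energy objective. -/
def AvgEnergyL {V : Type} (w : V → V → ℤ) (t : ℝ) : Set (ℕ → V) :=
  EnergyL w ∩ AvgE w t

/-- The mean-payoff objective. -/
def MP {V : Type} (w : V → V → ℤ) (t : ℝ) : Set (ℕ → V) :=
  {ρ | Filter.limsup (fun n => (((EL w ρ n : ℝ) / (n : ℝ)) : EReal)) Filter.atTop ≤ (t : EReal)}

/-- A memory structure: initial memory state and update along edges. -/
structure Mem (V M : Type) where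
  mI : M
  upd : M → V → V → M

/-- Tracking the memory state along a play. -/
def Mem.track {V M : Type} (mem : Mem V M) (ρ : ℕ → V) : ℕ → M
  | 0 => mem.mI
  | n + 1 => mem.upd (Mem.track mem ρ n) (ρ n) (ρ (n + 1))

def Mem.runAux {V M : Type} (mem : Mem V M) : M → List V → M
  | m, [] => m
  | m, [_] => m
  | m, a :: b :: l => Mem.runAux mem (mem.upd m a b) (b :: l)

/-- `Upd⁺`: the memory state reached along a finite play prefix. -/
def Mem.run {V M : Type} (mem : Mem V M) (h : List V) : M :=
  Mem.runAux mem mem.mI h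

/-- The strategy `σ` is implemented by the memory structure `mem`
(via some next-move function). -/
def Arena.ImplementedBy {V M : Type} (A : Arena V) (mem : Mem V M) (σ : List V → V) : Prop :=
  ∃ nxt : V → M → V, ∀ (h : List V) (v : V), σ (h ++ [v]) = nxt v (mem.run (h ++ [v]))

/-- `σ` is a finite-state strategy of size `k`. -/
def Arena.FiniteStateOfSize {V : Type} (A : Arena V) (k : ℕ) (σ : List V → V) : Prop :=
  ∃ (M : Type) (inst : Fintype M) (mem : Mem V M),
    @Fintype.card M inst = k ∧ A.ImplementedBy mem σ

/-- The expanded arena `A × M`. -/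
def Arena.expand {V M : Type} (A : Arena V) (mem : Mem V M) : Arena (V × M) where
  V0 := {p | p.1 ∈ A.V0}
  E := fun p q => A.E p.1 q.1 ∧ q.2 = mem.upd p.2 p.1 q.1
  vI := (A.vI, mem.mI)
  succ := fun p => by
    obtain ⟨v', h⟩ := A.succ p.1
    exact ⟨(v', mem.upd p.2 p.1 v'), h, rfl⟩

/-- The extended play in `A × M` corresponding to a play in `A`. -/
def extendPlay {V M : Type} (mem : Mem V M) (ρ : ℕ → V) : ℕ → V × M :=
  fun n => (ρ n, Mem.track mem ρ n)

/-- `(A, Win) ≤_M (A × M, Win')`. -/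
def Reduces {V M : Type} (A : Arena V) (mem : Mem V M) (Win : Set (ℕ → V))
    (Win' : Set (ℕ → V × M)) : Prop :=
  ∀ ρ, A.Play ρ → (ρ ∈ Win ↔ extendPlay mem ρ ∈ Win')

/-- A recharge weight function (`none` is the recharge label `R`) assigns
non-positive weights to all (non-recharge) edges. -/
def RechargeWeights {V : Type} (A : Arena V) (w : V → V → Option ℤ) : Prop :=
  ∀ u v, A.E u v → ∀ k : ℤ, w u v = some k → k ≤ 0

/-- The recharge energy level of the prefix `ρ 0 ⋯ ρ n`: the capacity plus the
accumulated weight since the last `R`-edge. -/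
def ELcap {V : Type} (w : V → V → Option ℤ) (cap : ℕ) (ρ : ℕ → V) : ℕ → ℤ
  | 0 => (cap : ℤ)
  | n + 1 =>
    match w (ρ n) (ρ (n + 1)) with
    | none => (cap : ℤ)
    | some k => ELcap w cap ρ n + k

/-- The recharge objective. -/
def Recharge {V : Type} (w : V → V → Option ℤ) (cap : ℕ) : Set (ℕ → V) :=
  {ρ | ∀ n, 0 ≤ ELcap w cap ρ n}

/-- The average of the recharge energy levels of the first `n` prefixes. -/
noncomputable def avgELcap {V : Type} (w : V → V → Option ℤ) (cap : ℕ) (ρ : ℕ → V)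
    (n : ℕ) : ℝ :=
  (∑ i ∈ Finset.range n, (ELcap w cap ρ i : ℝ)) / (n : ℝ)

/-- The average-bounded recharge objective. -/
def AvgRecharge {V : Type} (w : V → V → Option ℤ) (cap : ℕ) (t : ℝ) : Set (ℕ → V) :=
  {ρ | Filter.limsup (fun n => (avgELcap w cap ρ n : EReal)) Filter.atTop ≤ (t : EReal)} ∩
    Recharge w cap

/-- The (max-)parity objective: the maximal color occurring infinitely often is even. -/
def ParityObj {V : Type} (Ω : V → ℕ) : Set (ℕ → V) :=
  {ρ | ∃ c, Even c ∧ {n | Ω (ρ n) = c}.Infinite ∧ ∀ d, {n | Ω (ρ n) = d}.Infinite → d ≤ c}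

namespace ARP

open Filter

variable {V : Type}

lemma prefixList_zero (ρ : ℕ → V) : prefixList ρ 0 = [ρ 0] := rfl

lemma prefixList_succ (ρ : ℕ → V) (n : ℕ) :
    prefixList ρ (n + 1) = prefixList ρ n ++ [ρ (n + 1)] := by
  simp [prefixList, List.range_succ]

lemma prefixList_ne_nil (ρ : ℕ → V) (n : ℕ) : prefixList ρ n ≠ [] := by
  cases n with
  | zero => simp [prefixList_zero]
  | succ k => simp [prefixList_succ]

lemma prefixList_getLastD (ρ : ℕ → V) (n : ℕ) (d : V) :
    (prefixList ρ n).getLastD d = ρ n := by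
  cases n with
  | zero => rfl
  | succ k => rw [prefixList_succ, List.getLastD_concat]

lemma prefixList_map {W : Type} (h : V → W) (ρ : ℕ → V) (n : ℕ) :
    (prefixList ρ n).map h = prefixList (fun k => h (ρ k)) n := by
  simp [prefixList]

/-- prepend a state to a play -/
def consPlay (s : V) (ρ : ℕ → V) : ℕ → V := fun n =>
  match n with
  | 0 => s
  | k + 1 => ρ k

lemma prefixList_consPlay (s : V) (ρ : ℕ → V) (n : ℕ) :
    prefixList (consPlay s ρ) (n + 1) = s :: prefixList ρ n := by
  induction n with
  | zero => rfl
  | succ k ih =>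
      rw [prefixList_succ, ih, prefixList_succ]
      rfl

/-- building a play from a next-move function -/
def hist (F : List V → V) (s : V) : ℕ → List V
  | 0 => [s]
  | n + 1 => hist F s n ++ [F (hist F s n)]

def bplay (F : List V → V) (s : V) : ℕ → V := fun n => (hist F s n).getLastD s

lemma hist_ne_nil (F : List V → V) (s : V) (n : ℕ) : hist F s n ≠ [] := by
  cases n with
  | zero => simp [hist]
  | succ k => simp [hist]

lemma bplay_zero (F : List V → V) (s : V) : bplay F s 0 = s := rfl

lemma prefixList_bplay (F : List V → V) (s : V) (n : ℕ) :
    prefixList (bplay F s) n = hist F s n := by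
  induction n with
  | zero => rfl
  | succ k ih =>
      rw [prefixList_succ, ih]
      show hist F s k ++ [(hist F s (k+1)).getLastD s] = _
      rw [hist, List.getLastD_concat]

lemma bplay_succ (F : List V → V) (s : V) (n : ℕ) :
    bplay F s (n + 1) = F (prefixList (bplay F s) n) := by
  rw [prefixList_bplay]
  show (hist F s (n+1)).getLastD s = _
  rw [hist, List.getLastD_concat]

/-- limsup upper bound helper -/
lemma limsup_le_of_le_add_div (u : ℕ → ℝ) (t C : ℝ)
    (h : ∀ n, 1 ≤ n → u n ≤ t + C / n) :
    limsup (fun n => ((u n : ℝ) : EReal)) atTop ≤ ((t : ℝ) : EReal) := by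
  have hv : Tendsto (fun n : ℕ => t + C / n) atTop (nhds t) := by
    have h0 : Tendsto (fun n : ℕ => C / n) atTop (nhds 0) :=
      Tendsto.div_atTop tendsto_const_nhds tendsto_natCast_atTop_atTop
    simpa using tendsto_const_nhds.add h0
  have hv' : Tendsto (fun n : ℕ => ((t + C / n : ℝ) : EReal)) atTop (nhds ((t : ℝ) : EReal)) :=
    EReal.tendsto_coe.2 hv
  calc limsup (fun n => ((u n : ℝ) : EReal)) atTop
      ≤ limsup (fun n : ℕ => ((t + C / n : ℝ) : EReal)) atTop := by
        apply limsup_le_limsup _ isCobounded_le_of_bot isBounded_le_of_top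
        filter_upwards [eventually_ge_atTop 1] with n hn
        exact_mod_cast h n hn
    _ = ((t : ℝ) : EReal) := hv'.limsup_eq

/-- limsup lower bound helper -/
lemma not_limsup_le_of_eventually_ge (u : ℕ → ℝ) (t a : ℝ) (hta : t < a)
    (h2 : ∀ᶠ n in atTop, a ≤ u n) :
    ¬ (limsup (fun n => ((u n : ℝ) : EReal)) atTop ≤ ((t : ℝ) : EReal)) := by
  intro hle
  have : ((a : ℝ) : EReal) ≤ limsup (fun n => ((u n : ℝ) : EReal)) atTop := by
    apply le_limsup_of_frequently_le _ isBounded_le_of_top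
    apply Eventually.frequently
    filter_upwards [h2] with n hn
    exact_mod_cast hn
  have := this.trans hle
  exact absurd (EReal.coe_le_coe_iff.1 this) (not_le.2 hta)

end ARP

namespace ARP
open Classical Filter
set_option linter.unusedSectionVars false

section Core
variable {S : Type} [Fintype S] (B : Arena S) (g : S → ℤ)

noncomputable def defaultSucc (s : S) : S := Classical.choose (B.succ s)

lemma defaultSucc_edge (s : S) : B.E s (defaultSucc B s) := Classical.choose_spec (B.succ s)

/-- drop elements until we hit `s` -/
noncomputable def popStack (s : S) : List S → List S
  | [] => []
  | a :: l => if a = s then a :: l else popStack s l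

/-- the elements before the first occurrence of `s` -/
noncomputable def cycL (s : S) : List S → List S
  | [] => []
  | a :: l => if a = s then [] else a :: cycL s l

lemma cycL_append_popStack (s : S) (p : List S) : cycL s p ++ popStack s p = p := by
  induction p with
  | nil => rfl
  | cons a l ih =>
      by_cases h : a = s
      · simp [cycL, popStack, h]
      · simp only [cycL, popStack, if_neg h, List.cons_append, ih]

lemma popStack_cons_of_mem (s : S) (p : List S) (h : s ∈ p) :
    ∃ l', popStack s p = s :: l' := by
  induction p with
  | nil => simp at h
  | cons a l ih =>
      by_cases ha : a = s
      · exact ⟨l, by simp [popStack, ha]⟩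
      · have : s ∈ l := by
          rcases List.mem_cons.1 h with h1 | h1
          · exact absurd h1.symm ha
          · exact h1
        simpa [popStack, ha] using ih this

lemma popStack_suffix (s : S) (p : List S) : popStack s p <:+ p :=
  ⟨cycL s p, cycL_append_popStack s p⟩

def wsum (p : List S) : ℤ := (p.map g).sum

/-- the sum of the weights on the cycle closed by moving from the top of `p` to `s'` -/
noncomputable def cycSum (s' : S) (p : List S) : ℤ := g s' + wsum g (cycL s' p)

/-- the first-cycle game: `MW k p` holds if, from the stack `p` (most recent first),
Player 0 can ensure that the first cycle that is closed has non-positive weight. -/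
noncomputable def MW : ℕ → List S → Prop
  | 0, _ => False
  | k + 1, p =>
      match p with
      | [] => False
      | s :: l =>
          if s ∈ B.V0 then
            ∃ s', B.E s s' ∧
              (if s' ∈ s :: l then cycSum g s' (s :: l) ≤ 0 else MW k (s' :: s :: l))
          else
            ∀ s', B.E s s' →
              (if s' ∈ s :: l then cycSum g s' (s :: l) ≤ 0 else MW k (s' :: s :: l))

/-- the "ok" condition on a move from stack `p` to `s'` (for Player 0) -/
def okC (p : List S) (s' : S) : Prop :=
  (s' ∈ p → cycSum g s' p ≤ 0) ∧
  (s' ∉ p → MW B g (Fintype.card S - p.length) (s' :: p))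

/-- the "bad" condition on a move from stack `p` to `s'` (for Player 1) -/
def badC (p : List S) (s' : S) : Prop :=
  (s' ∈ p → 1 ≤ cycSum g s' p) ∧
  (s' ∉ p → ¬ MW B g (Fintype.card S - p.length) (s' :: p))

/-- `GoodS p`: the stack `p` is a winning position for Player 0 in the first-cycle game,
in a hereditary way. -/
def GoodS (p : List S) : Prop :=
  p ≠ [] ∧ p.Nodup ∧ ∀ q, q <:+ p → q ≠ [] → MW B g (Fintype.card S + 1 - q.length) q

def BadS (p : List S) : Prop :=
  p ≠ [] ∧ p.Nodup ∧ ∀ q, q <:+ p → q ≠ [] → ¬ MW B g (Fintype.card S + 1 - q.length) q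

end Core
end ARP

namespace ARP
open Classical Filter
set_option linter.unusedSectionVars false
section Core2
variable {S : Type} [Fintype S] (B : Arena S) (g : S → ℤ)

lemma iteProp {c : Prop} [Decidable c] {X Y : Prop} :
    (if c then X else Y) ↔ ((c → X) ∧ (¬ c → Y)) := by
  by_cases h : c <;> simp [h]

lemma len_le_card {p : List S} (h : p.Nodup) : p.length ≤ Fintype.card S :=
  List.Nodup.length_le_card h

lemma good_unfold (p : List S) (hG : GoodS B g p) :
    ∃ s l, p = s :: l ∧
      ((s ∈ B.V0 → ∃ s', B.E s s' ∧ okC B g p s') ∧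
       (s ∉ B.V0 → ∀ s', B.E s s' → okC B g p s')) := by
  obtain ⟨hne, hnd, hall⟩ := hG
  obtain ⟨s, l, rfl⟩ := List.exists_cons_of_ne_nil hne
  refine ⟨s, l, rfl, ?_⟩
  have hlen : (s :: l).length ≤ Fintype.card S := len_le_card hnd
  have hmw := hall (s :: l) (List.suffix_refl _) (by simp)
  have hk : Fintype.card S + 1 - (s :: l).length
      = (Fintype.card S - (s :: l).length) + 1 := by omega
  rw [hk] at hmw
  rw [MW] at hmw
  constructor
  · intro hs
    rw [if_pos hs] at hmw
    obtain ⟨s', h1, h2⟩ := hmw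
    exact ⟨s', h1, iteProp.1 h2⟩
  · intro hs s' he
    rw [if_neg hs] at hmw
    exact iteProp.1 (hmw s' he)

lemma bad_unfold (p : List S) (hB : BadS B g p) :
    ∃ s l, p = s :: l ∧
      ((s ∈ B.V0 → ∀ s', B.E s s' → badC B g p s') ∧
       (s ∉ B.V0 → ∃ s', B.E s s' ∧ badC B g p s')) := by
  obtain ⟨hne, hnd, hall⟩ := hB
  obtain ⟨s, l, rfl⟩ := List.exists_cons_of_ne_nil hne
  refine ⟨s, l, rfl, ?_⟩
  have hlen : (s :: l).length ≤ Fintype.card S := len_le_card hnd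
  have hmw := hall (s :: l) (List.suffix_refl _) (by simp)
  have hk : Fintype.card S + 1 - (s :: l).length
      = (Fintype.card S - (s :: l).length) + 1 := by omega
  rw [hk] at hmw
  rw [MW] at hmw
  constructor
  · intro hs s' he
    rw [if_pos hs] at hmw
    push_neg at hmw
    have h2 := hmw s' he
    constructor
    · intro hmem
      rw [if_pos hmem] at h2
      omega
    · intro hmem
      rw [if_neg hmem] at h2
      exact h2
  · intro hs
    rw [if_neg hs] at hmw
    push_neg at hmw
    obtain ⟨s', he, h2⟩ := hmw
    refine ⟨s', he, ?_, ?_⟩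
    · intro hmem
      rw [if_pos hmem] at h2
      omega
    · intro hmem
      rw [if_neg hmem] at h2
      exact h2

noncomputable def pushpop (p : List S) (s' : S) : List S :=
  if s' ∈ p then popStack s' p else s' :: p

lemma good_step (p : List S) (s' : S) (hG : GoodS B g p) (hok : okC B g p s') :
    GoodS B g (pushpop p s') ∧ ∃ l', pushpop p s' = s' :: l' := by
  obtain ⟨hne, hnd, hall⟩ := hG
  by_cases hmem : s' ∈ p
  · rw [pushpop, if_pos hmem]
    obtain ⟨l', hl'⟩ := popStack_cons_of_mem s' p hmem
    have hsuf : popStack s' p <:+ p := popStack_suffix s' p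
    refine ⟨⟨by simp [hl'], hnd.sublist hsuf.sublist, ?_⟩, ⟨l', hl'⟩⟩
    intro q hq hqne
    exact hall q (hq.trans hsuf) hqne
  · rw [pushpop, if_neg hmem]
    refine ⟨⟨by simp, List.nodup_cons.2 ⟨hmem, hnd⟩, ?_⟩, ⟨p, rfl⟩⟩
    intro q hq hqne
    rcases List.suffix_cons_iff.1 hq with h1 | h1
    · subst h1
      have := hok.2 hmem
      have hk : Fintype.card S + 1 - (s' :: p).length
          = Fintype.card S - p.length := by simp
      rw [hk]
      exact this
    · exact hall q h1 hqne

lemma bad_step (p : List S) (s' : S) (hB : BadS B g p) (hbad : badC B g p s') :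
    BadS B g (pushpop p s') ∧ ∃ l', pushpop p s' = s' :: l' := by
  obtain ⟨hne, hnd, hall⟩ := hB
  by_cases hmem : s' ∈ p
  · rw [pushpop, if_pos hmem]
    obtain ⟨l', hl'⟩ := popStack_cons_of_mem s' p hmem
    have hsuf : popStack s' p <:+ p := popStack_suffix s' p
    refine ⟨⟨by simp [hl'], hnd.sublist hsuf.sublist, ?_⟩, ⟨l', hl'⟩⟩
    intro q hq hqne
    exact hall q (hq.trans hsuf) hqne
  · rw [pushpop, if_neg hmem]
    refine ⟨⟨by simp, List.nodup_cons.2 ⟨hmem, hnd⟩, ?_⟩, ⟨p, rfl⟩⟩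
    intro q hq hqne
    rcases List.suffix_cons_iff.1 hq with h1 | h1
    · subst h1
      have := hbad.2 hmem
      have hk : Fintype.card S + 1 - (s' :: p).length
          = Fintype.card S - p.length := by simp
      rw [hk]
      exact this
    · exact hall q h1 hqne

end Core2
end ARP

namespace ARP
open Classical Filter
set_option linter.unusedSectionVars false
section Core3
variable {S : Type} [Fintype S] (B : Arena S) (g : S → ℤ)

lemma pushpop_cons (p : List S) (s' : S) : ∃ l', pushpop p s' = s' :: l' := by
  by_cases hmem : s' ∈ p
  · rw [pushpop, if_pos hmem]
    exact popStack_cons_of_mem s' p hmem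
  · exact ⟨p, by rw [pushpop, if_neg hmem]⟩

lemma headD_pushpop (p : List S) (s' d : S) : (pushpop p s').headD d = s' := by
  obtain ⟨l', hl'⟩ := pushpop_cons p s'
  simp [hl']

noncomputable def stkk : List S → List S := fun h => h.foldl pushpop []

lemma stk_append (h : List S) (v : S) : stkk (h ++ [v]) = pushpop (stkk h) v := by
  simp [stkk, List.foldl_append]

noncomputable def minMove (p : List S) : S :=
  if h : ∃ s', B.E (p.headD B.vI) s' ∧ okC B g p s' then h.choose
  else defaultSucc B (p.headD B.vI)

lemma minMove_edge (p : List S) : B.E (p.headD B.vI) (minMove B g p) := by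
  rw [minMove]
  split
  · next h => exact h.choose_spec.1
  · exact defaultSucc_edge B _

lemma minMove_ok (p : List S) (h : ∃ s', B.E (p.headD B.vI) s' ∧ okC B g p s') :
    okC B g p (minMove B g p) := by
  rw [minMove, dif_pos h]
  exact h.choose_spec.2

noncomputable def sfc : List S → S := fun h => minMove B g (stkk h)

lemma sfc_strategy : B.IsStrategy B.V0 (sfc B g) := by
  intro h v _
  show B.E v (minMove B g (stkk (h ++ [v])))
  have h2 := minMove_edge B g (pushpop (stkk h) v)
  rw [headD_pushpop] at h2
  rw [stk_append]
  exact h2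

def Wb : ℕ := Finset.univ.sup fun s : S => (g s).natAbs

lemma g_le_Wb (s : S) : g s ≤ ((Wb g : ℕ) : ℤ) := by
  have h1 : (g s).natAbs ≤ Wb g :=
    Finset.le_sup (f := fun s : S => (g s).natAbs) (Finset.mem_univ s)
  have := Int.le_natAbs (a := g s)
  omega

lemma neg_Wb_le_g (s : S) : -((Wb g : ℕ) : ℤ) ≤ g s := by
  have h1 : (g s).natAbs ≤ Wb g :=
    Finset.le_sup (f := fun s : S => (g s).natAbs) (Finset.mem_univ s)
  have : (g s).natAbs = (g s).natAbs := rfl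
  omega

lemma wsum_append (a b : List S) : wsum g (a ++ b) = wsum g a + wsum g b := by
  simp [wsum]

lemma wsum_cons (a : S) (p : List S) : wsum g (a :: p) = g a + wsum g p := by
  simp [wsum]

lemma wsum_le (p : List S) : wsum g p ≤ ((p.length * Wb g : ℕ) : ℤ) := by
  induction p with
  | nil => simp [wsum]
  | cons a l ih =>
      rw [wsum_cons]
      have := g_le_Wb g a
      have hlen : ((a :: l).length * Wb g : ℕ) = (l.length * Wb g) + Wb g := by
        simp [Nat.succ_mul]
      omega

lemma wsum_ge (p : List S) : -((p.length * Wb g : ℕ) : ℤ) ≤ wsum g p := by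
  induction p with
  | nil => simp [wsum]
  | cons a l ih =>
      rw [wsum_cons]
      have := neg_Wb_le_g g a
      have hlen : ((a :: l).length * Wb g : ℕ) = (l.length * Wb g) + Wb g := by
        simp [Nat.succ_mul]
      push_cast at ih ⊢
      push_cast [hlen]
      omega

lemma good_singleton (hMW : MW B g (Fintype.card S) [B.vI]) : GoodS B g [B.vI] := by
  refine ⟨by simp, by simp, ?_⟩
  intro q hq hqne
  rcases List.suffix_cons_iff.1 hq with h1 | h1
  · subst h1
    simpa using hMW
  · exact absurd (List.suffix_nil.1 h1) hqne

theorem fc1_inv (hMW : MW B g (Fintype.card S) [B.vI]) (ρ : ℕ → S)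
    (hp : B.Play ρ) (hc : B.ConsistentWith B.V0 (sfc B g) ρ) (n : ℕ) :
    GoodS B g (stkk (prefixList ρ n)) ∧ (∃ l', stkk (prefixList ρ n) = ρ n :: l') ∧
      (∑ i ∈ Finset.range n, g (ρ i)) ≤ wsum g (stkk (prefixList ρ n)) - g (ρ n) := by
  induction n with
  | zero =>
      have h0 : stkk (prefixList ρ 0) = [ρ 0] := by
        rw [prefixList_zero]
        show pushpop [] (ρ 0) = [ρ 0]
        rw [pushpop, if_neg List.not_mem_nil]
      rw [h0, hp.1]
      refine ⟨good_singleton B g hMW, ⟨[], rfl⟩, ?_⟩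
      simp [wsum_cons, wsum, hp.1]
  | succ n ih =>
      obtain ⟨hG, ⟨l', hl'⟩, hsum⟩ := ih
      set p := stkk (prefixList ρ n) with hp'
      have hstep : stkk (prefixList ρ (n + 1)) = pushpop p (ρ (n + 1)) := by
        rw [prefixList_succ, stk_append]
      have hhd : p.headD B.vI = ρ n := by rw [hl']; rfl
      -- obtain the ok condition for the move to ρ (n+1)
      obtain ⟨s, l, hpsl, hmin, hmax⟩ := good_unfold B g p hG
      have hs : s = ρ n := by
        rw [hpsl] at hl'
        exact (List.cons.injEq .. ▸ hl').1
      have hok : okC B g p (ρ (n + 1)) := by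
        by_cases hv : ρ n ∈ B.V0
        · have hcons := hc n hv
          have : ρ (n + 1) = minMove B g p := hcons
          rw [this]
          apply minMove_ok
          obtain ⟨s', h1, h2⟩ := hmin (hs ▸ hv)
          exact ⟨s', by rwa [hhd, ← hs], h2⟩
        · have := hmax (hs ▸ hv) (ρ (n + 1)) (hs ▸ hp.2 n)
          exact this
      obtain ⟨hG2, hshape⟩ := good_step B g p (ρ (n + 1)) hG hok
      refine ⟨hstep ▸ hG2, hstep ▸ hshape, ?_⟩
      rw [hstep, Finset.sum_range_succ]
      by_cases hmem : ρ (n + 1) ∈ p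
      · -- pop
        have hcyc : cycSum g (ρ (n + 1)) p ≤ 0 := hok.1 hmem
        rw [pushpop, if_pos hmem]
        have hdecomp : wsum g p = wsum g (cycL (ρ (n+1)) p) + wsum g (popStack (ρ (n+1)) p) := by
          conv_lhs => rw [← cycL_append_popStack (ρ (n+1)) p]
          exact wsum_append g _ _
        rw [cycSum] at hcyc
        have hple : wsum g p - g (ρ n) ≥ ∑ i ∈ Finset.range n, g (ρ i) := hsum
        omega
      · -- push
        rw [pushpop, if_neg hmem, wsum_cons]
        omega

theorem fc1 (hMW : MW B g (Fintype.card S) [B.vI]) (ρ : ℕ → S)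
    (hp : B.Play ρ) (hc : B.ConsistentWith B.V0 (sfc B g) ρ) (n : ℕ) :
    (∑ i ∈ Finset.range n, g (ρ i)) ≤ ((Fintype.card S * Wb g + Wb g : ℕ) : ℤ) := by
  obtain ⟨hG, ⟨l', hl'⟩, hsum⟩ := fc1_inv B g hMW ρ hp hc n
  have hlen : (stkk (prefixList ρ n)).length ≤ Fintype.card S := len_le_card hG.2.1
  have h1 : wsum g (stkk (prefixList ρ n)) ≤ (((stkk (prefixList ρ n)).length * Wb g : ℕ) : ℤ) :=
    wsum_le g _
  have h2 : (((stkk (prefixList ρ n)).length * Wb g : ℕ) : ℤ)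
      ≤ ((Fintype.card S * Wb g : ℕ) : ℤ) := by
    have := Nat.mul_le_mul_right (Wb g) hlen
    exact_mod_cast this
  have h3 := neg_Wb_le_g g (ρ n)
  push_cast at h2 ⊢
  omega

end Core3
end ARP

namespace ARP
open Classical Filter
set_option linter.unusedSectionVars false
section Core4
variable {S : Type} [Fintype S] (B : Arena S) (g : S → ℤ)

lemma prefixList_decomp (ρ : ℕ → S) (n : ℕ) :
    prefixList ρ n = (prefixList ρ n).dropLast ++ [ρ n] := by
  cases n with
  | zero => rfl
  | succ k => rw [prefixList_succ, List.dropLast_concat]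

lemma strat_edge (σ : List S → S) (hstrat : B.IsStrategy B.V0 σ) (ρ : ℕ → S) (n : ℕ)
    (hv : ρ n ∈ B.V0) : B.E (ρ n) (σ (prefixList ρ n)) := by
  have := hstrat (prefixList ρ n).dropLast (ρ n) hv
  rwa [← prefixList_decomp] at this

lemma playExists (σ : List S → S) (hstrat : B.IsStrategy B.V0 σ) (s : S) :
    ∃ ρ : ℕ → S, ρ 0 = s ∧ (∀ n, B.E (ρ n) (ρ (n + 1))) ∧
      (∀ n, ρ n ∈ B.V0 → ρ (n + 1) = σ (prefixList ρ n)) := by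
  set F : List S → S := fun h =>
    if h.getLastD B.vI ∈ B.V0 then σ h else defaultSucc B (h.getLastD B.vI) with hF
  refine ⟨bplay F s, bplay_zero F s, ?_, ?_⟩
  · intro n
    rw [bplay_succ, hF]
    simp only [prefixList_getLastD]
    by_cases hv : bplay F s n ∈ B.V0
    · rw [if_pos hv]
      exact strat_edge B σ hstrat _ n hv
    · rw [if_neg hv]
      exact defaultSucc_edge B _
  · intro n hv
    rw [bplay_succ, hF]
    simp only [prefixList_getLastD]
    rw [if_pos hv]

def Guar (σ : List S → S) (s : S) (c : ℕ) : Prop :=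
  B.IsStrategy B.V0 σ ∧ ∀ ρ : ℕ → S, ρ 0 = s → (∀ n, B.E (ρ n) (ρ (n + 1))) →
    (∀ n, ρ n ∈ B.V0 → ρ (n + 1) = σ (prefixList ρ n)) →
    ∀ n, (∑ i ∈ Finset.range n, g (ρ i)) ≤ (c : ℤ)

def Dom (s : S) : Prop := ∃ c σ, Guar B g σ s c

noncomputable def Wd (s : S) : ℕ := sInf {c | ∃ σ, Guar B g σ s c}

lemma wd_spec (s : S) (h : Dom B g s) : ∃ σ, Guar B g σ s (Wd B g s) := by
  obtain ⟨c, σ, hg⟩ := h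
  exact Nat.sInf_mem (⟨c, σ, hg⟩ : {c | ∃ σ, Guar B g σ s c}.Nonempty)

lemma wd_min (s : S) (c : ℕ) (σ : List S → S) (h : Guar B g σ s c) : Wd B g s ≤ c :=
  Nat.sInf_le ⟨σ, h⟩

lemma guar_head (σ : List S → S) (s : S) (c : ℕ) (h : Guar B g σ s c) : g s ≤ (c : ℤ) := by
  obtain ⟨ρ, h0, he, hcons⟩ := playExists B σ h.1 s
  have := h.2 ρ h0 he hcons 1
  simpa [Finset.sum_range_one, h0] using this

lemma guar_residual (σ : List S → S) (s : S) (c : ℕ) (s' : S) (h : Guar B g σ s c)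
    (hE : B.E s s') (hmove : s ∈ B.V0 → σ [s] = s') :
    Guar B g (fun l => σ (s :: l)) s' ((c : ℤ) - g s).toNat := by
  constructor
  · intro h' v hv
    have := h.1 (s :: h') v hv
    simpa using this
  · intro ρ' h0 he hcons n
    set ρ := consPlay s ρ' with hρ
    have hρ0 : ρ 0 = s := rfl
    have hρs : ∀ k, ρ (k + 1) = ρ' k := fun k => rfl
    have he' : ∀ k, B.E (ρ k) (ρ (k + 1)) := by
      intro k
      cases k with
      | zero => rw [hρ0, hρs]; rw [h0]; exact hE
      | succ m => rw [hρs, hρs]; exact he m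
    have hcons' : ∀ k, ρ k ∈ B.V0 → ρ (k + 1) = σ (prefixList ρ k) := by
      intro k hv
      cases k with
      | zero =>
          rw [prefixList_zero, hρ0]
          rw [hρs, h0]
          exact (hmove (hρ0 ▸ hv)).symm
      | succ m =>
          rw [prefixList_consPlay]
          rw [hρs]
          exact hcons m (hv)
    have hb := h.2 ρ hρ0 he' hcons' (n + 1)
    rw [Finset.sum_range_succ'] at hb
    have hsum : ∀ i, g (ρ (i + 1)) = g (ρ' i) := fun i => by rw [hρs]
    simp only [hsum, hρ0] at hb
    have hhead := guar_head B g σ s c h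
    have : ((((c : ℤ) - g s).toNat : ℤ)) = (c : ℤ) - g s := Int.toNat_of_nonneg (by omega)
    omega

lemma dom_min (s : S) (hD : Dom B g s) (hs : s ∈ B.V0) :
    ∃ s', B.E s s' ∧ Dom B g s' ∧ ((Wd B g s' : ℤ) ≤ (Wd B g s : ℤ) - g s) := by
  obtain ⟨σ, hg⟩ := wd_spec B g s hD
  have hE : B.E s (σ [s]) := by
    have := hg.1 [] s hs
    simpa using this
  have hres := guar_residual B g σ s _ (σ [s]) hg hE (fun _ => rfl)
  refine ⟨σ [s], hE, ⟨_, _, hres⟩, ?_⟩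
  have hle := wd_min B g (σ [s]) _ _ hres
  have hhead := guar_head B g σ s _ hg
  have ht : ((((Wd B g s : ℤ) - g s).toNat : ℤ)) = (Wd B g s : ℤ) - g s :=
    Int.toNat_of_nonneg (by omega)
  omega

lemma dom_max (s : S) (hD : Dom B g s) (hs : s ∉ B.V0) (s' : S) (hE : B.E s s') :
    Dom B g s' ∧ ((Wd B g s' : ℤ) ≤ (Wd B g s : ℤ) - g s) := by
  obtain ⟨σ, hg⟩ := wd_spec B g s hD
  have hres := guar_residual B g σ s _ s' hg hE (fun h => absurd h hs)
  refine ⟨⟨_, _, hres⟩, ?_⟩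
  have hle := wd_min B g s' _ _ hres
  have hhead := guar_head B g σ s _ hg
  have ht : ((((Wd B g s : ℤ) - g s).toNat : ℤ)) = (Wd B g s : ℤ) - g s :=
    Int.toNat_of_nonneg (by omega)
  omega

noncomputable def posStrat : S → S := fun s =>
  if h : ∃ s', B.E s s' ∧ Dom B g s' ∧ ((Wd B g s' : ℤ) ≤ (Wd B g s : ℤ) - g s) then h.choose
  else defaultSucc B s

lemma posStrat_edge (s : S) : B.E s (posStrat B g s) := by
  rw [posStrat]
  split
  · next h => exact h.choose_spec.1
  · exact defaultSucc_edge B s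

theorem pos_inv (hvI : Dom B g B.vI) (π : ℕ → S) (hp : B.Play π)
    (hc : ∀ n, π n ∈ B.V0 → π (n + 1) = posStrat B g (π n)) (n : ℕ) :
    Dom B g (π n) ∧ (∑ i ∈ Finset.range n, g (π i)) + (Wd B g (π n) : ℤ) ≤ (Wd B g B.vI : ℤ) := by
  induction n with
  | zero => rw [hp.1]; simpa using hvI
  | succ n ih =>
      obtain ⟨hD, hsum⟩ := ih
      rw [Finset.sum_range_succ]
      by_cases hv : π n ∈ B.V0
      · have hex := dom_min B g (π n) hD hv
        have hmove := hc n hv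
        rw [posStrat, dif_pos hex] at hmove
        have hspec := hex.choose_spec
        rw [← hmove] at hspec
        exact ⟨hspec.2.1, by have := hspec.2.2; omega⟩
      · have := dom_max B g (π n) hD hv (π (n + 1)) (hp.2 n)
        exact ⟨this.1, by have := this.2; omega⟩

end Core4
end ARP

namespace ARP
open Classical Filter
set_option linter.unusedSectionVars false
section Core5
variable {S : Type} [Fintype S] (B : Arena S) (g : S → ℤ)

noncomputable def maxMove (p : List S) : S :=
  if h : ∃ s', B.E (p.headD B.vI) s' ∧ badC B g p s' then h.choose
  else defaultSucc B (p.headD B.vI)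

lemma maxMove_edge (p : List S) : B.E (p.headD B.vI) (maxMove B g p) := by
  rw [maxMove]
  split
  · next h => exact h.choose_spec.1
  · exact defaultSucc_edge B _

lemma maxMove_bad (p : List S) (h : ∃ s', B.E (p.headD B.vI) s' ∧ badC B g p s') :
    badC B g p (maxMove B g p) := by
  rw [maxMove, dif_pos h]
  exact h.choose_spec.2

variable (σh : List S → S)

noncomputable def FMax : List S → S := fun l =>
  if l.getLastD B.vI ∈ B.V0 then σh l else maxMove B g (stkk l)

noncomputable def ρmax : ℕ → S := bplay (FMax B g σh) B.vI

lemma bad_singleton (hn : ¬ MW B g (Fintype.card S) [B.vI]) : BadS B g [B.vI] := by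
  refine ⟨by simp, by simp, ?_⟩
  intro q hq hqne
  rcases List.suffix_cons_iff.1 hq with h1 | h1
  · subst h1
    simpa using hn
  · exact absurd (List.suffix_nil.1 h1) hqne

def Pfc2 (n : ℕ) : Prop :=
  BadS B g (stkk (prefixList (ρmax B g σh) n)) ∧
    ∃ l', stkk (prefixList (ρmax B g σh) n) = ρmax B g σh n :: l'

lemma fc2_step (hstrat : B.IsStrategy B.V0 σh) (n : ℕ) (hP : Pfc2 B g σh n) :
    B.E (ρmax B g σh n) (ρmax B g σh (n + 1)) ∧
    badC B g (stkk (prefixList (ρmax B g σh) n)) (ρmax B g σh (n + 1)) ∧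
    Pfc2 B g σh (n + 1) := by
  obtain ⟨hB, ⟨l', hl'⟩⟩ := hP
  set ρ := ρmax B g σh with hρ
  set p := stkk (prefixList ρ n) with hpdef
  have hstep : stkk (prefixList ρ (n + 1)) = pushpop p (ρ (n + 1)) := by
    rw [prefixList_succ, stk_append]
  have hhd : p.headD B.vI = ρ n := by rw [hl']; rfl
  obtain ⟨s, l, hpsl, hmin, hmax⟩ := bad_unfold B g p hB
  have hs : s = ρ n := by
    rw [hpsl] at hl'
    exact (List.cons.injEq .. ▸ hl').1
  have hnext : ρ (n + 1) = FMax B g σh (prefixList ρ n) := bplay_succ _ _ n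
  have hgl : (prefixList ρ n).getLastD B.vI = ρ n := prefixList_getLastD ρ n B.vI
  have key : B.E (ρ n) (ρ (n + 1)) ∧ badC B g p (ρ (n + 1)) := by
    by_cases hv : ρ n ∈ B.V0
    · have : ρ (n + 1) = σh (prefixList ρ n) := by
        rw [hnext, FMax, hgl, if_pos hv]
      have hE : B.E (ρ n) (ρ (n + 1)) := by
        rw [this]
        exact strat_edge B σh hstrat ρ n hv
      exact ⟨hE, hmin (hs ▸ hv) (ρ (n + 1)) (hs ▸ hE)⟩
    · have hmm : ρ (n + 1) = maxMove B g p := by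
        rw [hnext, FMax, hgl, if_neg hv]
      obtain ⟨s', he', hb'⟩ := hmax (hs ▸ hv)
      have hbad : badC B g p (ρ (n + 1)) := by
        rw [hmm]
        apply maxMove_bad
        exact ⟨s', by rwa [hhd, ← hs], hb'⟩
      have hE : B.E (ρ n) (ρ (n + 1)) := by
        rw [hmm]
        have := maxMove_edge B g p
        rwa [hhd] at this
      exact ⟨hE, hbad⟩
  obtain ⟨hB2, hshape⟩ := bad_step B g p (ρ (n + 1)) hB key.2
  exact ⟨key.1, key.2, hstep ▸ hB2, hstep ▸ hshape⟩

lemma fc2_inv (hstrat : B.IsStrategy B.V0 σh) (hn : ¬ MW B g (Fintype.card S) [B.vI]) :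
    ∀ n, Pfc2 B g σh n := by
  intro n
  induction n with
  | zero =>
      have h00 : ρmax B g σh 0 = B.vI := bplay_zero _ _
      have h0 : stkk (prefixList (ρmax B g σh) 0) = [ρmax B g σh 0] := by
        rw [prefixList_zero]
        show pushpop [] _ = _
        rw [pushpop, if_neg List.not_mem_nil]
      constructor
      · rw [h0, h00]
        exact bad_singleton B g hn
      · exact ⟨[], h0⟩
  | succ n ih => exact (fc2_step B g σh hstrat n ih).2.2

lemma fc2_play (hstrat : B.IsStrategy B.V0 σh) (hn : ¬ MW B g (Fintype.card S) [B.vI]) :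
    B.Play (ρmax B g σh) ∧ B.ConsistentWith B.V0 σh (ρmax B g σh) := by
  constructor
  · exact ⟨bplay_zero _ _, fun n => (fc2_step B g σh hstrat n (fc2_inv B g σh hstrat hn n)).1⟩
  · intro n hv
    have hgl : (prefixList (ρmax B g σh) n).getLastD B.vI = ρmax B g σh n :=
      prefixList_getLastD _ n B.vI
    rw [show ρmax B g σh (n+1) = FMax B g σh (prefixList (ρmax B g σh) n) from bplay_succ _ _ n,
      FMax, hgl, if_pos hv]

noncomputable def pops (n : ℕ) : ℕ :=
  ((Finset.range n).filter (fun i => ρmax B g σh (i + 1) ∈ stkk (prefixList (ρmax B g σh) i))).card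

lemma pops_succ (n : ℕ) :
    pops B g σh (n + 1) = pops B g σh n +
      (if ρmax B g σh (n + 1) ∈ stkk (prefixList (ρmax B g σh) n) then 1 else 0) := by
  rw [pops, pops, Finset.range_add_one, Finset.filter_insert]
  split
  · rw [Finset.card_insert_of_notMem (fun hmem => by simpa using (Finset.mem_filter.1 hmem).1)]
  · simp

lemma fc2_account (hstrat : B.IsStrategy B.V0 σh) (hn : ¬ MW B g (Fintype.card S) [B.vI]) :
    ∀ n, ((pops B g σh n : ℤ) + (wsum g (stkk (prefixList (ρmax B g σh) n)) - g (ρmax B g σh n))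
        ≤ ∑ i ∈ Finset.range n, g (ρmax B g σh i)) ∧
      (n + 1 ≤ (stkk (prefixList (ρmax B g σh) n)).length + pops B g σh n * Fintype.card S) := by
  intro n
  induction n with
  | zero =>
      have h0 : stkk (prefixList (ρmax B g σh) 0) = [ρmax B g σh 0] := by
        rw [prefixList_zero]
        show pushpop [] _ = _
        rw [pushpop, if_neg List.not_mem_nil]
      rw [h0]
      constructor
      · simp [pops, wsum_cons, wsum]
      · simp [pops]
  | succ n ih =>
      obtain ⟨hacc, hlen⟩ := ih
      set ρ := ρmax B g σh with hρ
      set p := stkk (prefixList ρ n) with hpdef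
      have hP := fc2_inv B g σh hstrat hn n
      have hstepl := fc2_step B g σh hstrat n hP
      have hbad : badC B g p (ρ (n + 1)) := hstepl.2.1
      obtain ⟨hBS, ⟨l', hl'⟩⟩ := hP
      obtain ⟨hBS2, ⟨l2, hl2⟩⟩ := hstepl.2.2
      have hstep : stkk (prefixList ρ (n + 1)) = pushpop p (ρ (n + 1)) := by
        rw [prefixList_succ, stk_append]
      have hlenp : p.length ≤ Fintype.card S := len_le_card hBS.2.1
      rw [Finset.sum_range_succ, pops_succ]
      by_cases hmem : ρ (n + 1) ∈ p
      · -- pop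
        have hcyc : 1 ≤ cycSum g (ρ (n + 1)) p := hbad.1 hmem
        rw [cycSum] at hcyc
        have hpp : pushpop p (ρ (n + 1)) = popStack (ρ (n + 1)) p := by
          rw [pushpop, if_pos hmem]
        have hdecomp : wsum g p
            = wsum g (cycL (ρ (n+1)) p) + wsum g (popStack (ρ (n+1)) p) := by
          conv_lhs => rw [← cycL_append_popStack (ρ (n+1)) p]
          exact wsum_append g _ _
        have hlen2 : 1 ≤ (stkk (prefixList ρ (n + 1))).length := by
          rw [hl2]
          simp
        rw [if_pos hmem]
        constructor
        · rw [hstep, hpp]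
          push_cast
          omega
        · have hmul : (pops B g σh n + 1) * Fintype.card S
              = pops B g σh n * Fintype.card S + Fintype.card S := by ring
          omega
      · -- push
        have hpp : pushpop p (ρ (n + 1)) = ρ (n + 1) :: p := by
          rw [pushpop, if_neg hmem]
        rw [if_neg hmem]
        constructor
        · rw [hstep, hpp, wsum_cons]
          push_cast
          omega

        · rw [hstep, hpp]
          simp only [List.length_cons, Nat.add_zero]
          omega

theorem fc2 (hstrat : B.IsStrategy B.V0 σh) (hn : ¬ MW B g (Fintype.card S) [B.vI]) :
    ∃ ρ : ℕ → S, B.Play ρ ∧ B.ConsistentWith B.V0 σh ρ ∧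
      ∀ n : ℕ, (n : ℤ) ≤ (Fintype.card S : ℤ) * (∑ i ∈ Finset.range n, g (ρ i)) +
        ((Fintype.card S : ℤ) + (Fintype.card S : ℤ) *
          ((Fintype.card S : ℤ) * (Wb g : ℤ) + (Wb g : ℤ))) := by
  obtain ⟨hplay, hcons⟩ := fc2_play B g σh hstrat hn
  refine ⟨ρmax B g σh, hplay, hcons, ?_⟩
  intro n
  obtain ⟨hacc, hlen⟩ := fc2_account B g σh hstrat hn n
  have hP := fc2_inv B g σh hstrat hn n
  obtain ⟨hBS, ⟨l', hl'⟩⟩ := hP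
  have hlenp : (stkk (prefixList (ρmax B g σh) n)).length ≤ Fintype.card S :=
    len_le_card hBS.2.1
  have hw : -(((stkk (prefixList (ρmax B g σh) n)).length * Wb g : ℕ) : ℤ)
      ≤ wsum g (stkk (prefixList (ρmax B g σh) n)) := wsum_ge g _
  have hg := neg_Wb_le_g g (ρmax B g σh n)
  have hcard : ((stkk (prefixList (ρmax B g σh) n)).length * Wb g : ℕ)
      ≤ Fintype.card S * Wb g := Nat.mul_le_mul_right _ hlenp
  -- from hlen : n + 1 ≤ len + pops * card
  have hpops : (n : ℤ) + 1 ≤ (Fintype.card S : ℤ) + (pops B g σh n : ℤ) * Fintype.card S := by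
    exact_mod_cast Nat.le_trans hlen (Nat.add_le_add_right hlenp _)
  -- from hacc : pops + wsum - g ≤ Σ
  have hg2 := g_le_Wb g (ρmax B g σh n)
  have hsum : (pops B g σh n : ℤ) - ((Fintype.card S : ℤ) * (Wb g : ℤ)) - (Wb g : ℤ)
      ≤ ∑ i ∈ Finset.range n, g (ρmax B g σh i) := by
    have hcast : ((Fintype.card S * Wb g : ℕ) : ℤ) = (Fintype.card S : ℤ) * (Wb g : ℤ) := by
      push_cast; ring
    have h2 : (((stkk (prefixList (ρmax B g σh) n)).length * Wb g : ℕ) : ℤ)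
        ≤ ((Fintype.card S * Wb g : ℕ) : ℤ) := by exact_mod_cast hcard
    omega
  have hc0 : (0:ℤ) < Fintype.card S := by
    have : 0 < Fintype.card S := Fintype.card_pos_iff.2 ⟨B.vI⟩
    exact_mod_cast this
  have h1 : (Fintype.card S : ℤ) * ((pops B g σh n : ℤ)
        - ((Fintype.card S : ℤ) * (Wb g : ℤ)) - (Wb g : ℤ))
      ≤ (Fintype.card S : ℤ) * (∑ i ∈ Finset.range n, g (ρmax B g σh i)) :=
    mul_le_mul_of_nonneg_left hsum hc0.le
  nlinarith [h1, hpops, hc0]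
  
end Core5
end ARP

namespace ARP
open Classical Filter
set_option linter.unusedSectionVars false
section Core6
variable {S : Type} [Fintype S] (B : Arena S)

noncomputable def avgS (f : S → ℤ) (π : ℕ → S) (n : ℕ) : ℝ :=
  ((∑ i ∈ Finset.range n, f (π i) : ℤ) : ℝ) / (n : ℝ)

theorem core (f : S → ℤ) (t : ℤ) (σh : List S → S) (hstrat : B.IsStrategy B.V0 σh)
    (hwin : ∀ π, B.Play π → B.ConsistentWith B.V0 σh π →
      limsup (fun n => ((avgS f π n : ℝ) : EReal)) atTop ≤ (((t : ℝ) : ℝ) : EReal)) :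
    ∃ pos : S → S, (∀ s, B.E s (pos s)) ∧
      ∀ π, B.Play π → (∀ n, π n ∈ B.V0 → π (n + 1) = pos (π n)) →
        limsup (fun n => ((avgS f π n : ℝ) : EReal)) atTop ≤ (((t : ℝ) : ℝ) : EReal) := by
  set g : S → ℤ := fun s => f s - t with hg
  have hsum_fg : ∀ (π : ℕ → S) (n : ℕ),
      (∑ i ∈ Finset.range n, f (π i)) = (∑ i ∈ Finset.range n, g (π i)) + n * t := by
    intro π n
    simp only [hg, Finset.sum_sub_distrib, Finset.sum_const, Finset.card_range, smul_eq_mul]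
    ring
  by_cases hMW : MW B g (Fintype.card S) [B.vI]
  · -- Player 0 wins the first-cycle game: extract a positional strategy
    have hGuar : Guar B g (sfc B g) B.vI (Fintype.card S * Wb g + Wb g) := by
      refine ⟨sfc_strategy B g, ?_⟩
      intro ρ h0 he hcons n
      exact fc1 B g hMW ρ ⟨h0, he⟩ hcons n
    have hDom : Dom B g B.vI := ⟨_, _, hGuar⟩
    refine ⟨posStrat B g, posStrat_edge B g, ?_⟩
    intro π hp hc
    set Cw : ℕ := Wd B g B.vI with hCw
    have hbound : ∀ n, (∑ i ∈ Finset.range n, g (π i)) ≤ (Cw : ℤ) := by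
      intro n
      have := (pos_inv B g hDom π hp hc n).2
      have h0 : (0 : ℤ) ≤ (Wd B g (π n) : ℤ) := Int.ofNat_nonneg _
      omega
    apply limsup_le_of_le_add_div (fun n => avgS f π n) t (Cw : ℝ)
    intro n hn
    have hnpos : (0 : ℝ) < (n : ℝ) := by exact_mod_cast hn
    rw [avgS, div_le_iff₀ hnpos]
    have hfle : ((∑ i ∈ Finset.range n, f (π i) : ℤ) : ℝ) ≤ (t : ℝ) * n + Cw := by
      have h1 := hbound n
      have h2 := hsum_fg π n
      have : (∑ i ∈ Finset.range n, f (π i)) ≤ (Cw : ℤ) + n * t := by omega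
      have hR : ((∑ i ∈ Finset.range n, f (π i) : ℤ) : ℝ) ≤ (((Cw : ℤ) + n * t : ℤ) : ℝ) := by
        exact_mod_cast this
      push_cast at hR
      push_cast
      linarith
    have hexp : ((t : ℝ) + (Cw : ℝ) / n) * n = (t : ℝ) * n + Cw := by
      field_simp
    linarith [hexp, hfle]
  · -- Player 1 wins the first-cycle game: contradiction with σh winning
    exfalso
    obtain ⟨ρ, hplay, hcons, hbound⟩ := fc2 B g σh hstrat hMW
    have hws := hwin ρ hplay hcons
    set N : ℤ := (Fintype.card S : ℤ) with hN
    have hNpos : (0 : ℤ) < N := by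
      rw [hN]
      exact_mod_cast (Fintype.card_pos_iff.2 ⟨B.vI⟩ : 0 < Fintype.card S)
    set Eint : ℤ := N + N * (N * Wb g + Wb g) with hEint
    have hEnn : 0 ≤ Eint := by
      have h1 : (0:ℤ) ≤ (Wb g : ℤ) := Int.ofNat_nonneg _
      have h2 : (0:ℤ) ≤ N * (Wb g : ℤ) := mul_nonneg hNpos.le h1
      have h3 : (0:ℤ) ≤ N * (N * (Wb g : ℤ) + (Wb g : ℤ)) := mul_nonneg hNpos.le (by linarith)
      rw [hEint]
      linarith
    have hNr : (0 : ℝ) < (N : ℝ) := by exact_mod_cast hNpos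
    refine not_limsup_le_of_eventually_ge (fun n => avgS f ρ n) t
      ((t : ℝ) + 1 / (2 * N)) ?_ ?_ hws
    · have : (0:ℝ) < 1 / (2 * (N:ℝ)) := by positivity
      linarith
    · filter_upwards [eventually_ge_atTop (max 1 (2 * Eint).toNat)] with n hn
      have hn1 : 1 ≤ n := le_trans (le_max_left _ _) hn
      have hn2 : 2 * Eint ≤ (n : ℤ) := by
        have := le_trans (le_max_right 1 (2 * Eint).toNat) hn
        have h2 : ((2 * Eint).toNat : ℤ) ≤ (n : ℤ) := by exact_mod_cast this
        omega
      set Sg : ℤ := ∑ i ∈ Finset.range n, g (ρ i) with hSg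
      set Sf : ℤ := ∑ i ∈ Finset.range n, f (ρ i) with hSf
      have hfg : Sf = Sg + n * t := hsum_fg ρ n
      have hb := hbound n
      have e1 : 2 * N * Sf = 2 * (N * Sg) + 2 * N * t * n := by rw [hfg]; ring
      have hZ : 2 * N * t * n + n ≤ 2 * N * Sf := by
        have : (n : ℤ) ≤ N * Sg + Eint := hb
        omega
      -- now the real inequality
      have hnpos : (0 : ℝ) < (n : ℝ) := by exact_mod_cast hn1
      show (t : ℝ) + 1 / (2 * N) ≤ avgS f ρ n
      rw [avgS, le_div_iff₀ hnpos]
      have hZr : 2 * (N:ℝ) * (t : ℝ) * n + n ≤ 2 * N * (Sf : ℝ) := by exact_mod_cast hZ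
      have h2N : (0:ℝ) < 2 * (N:ℝ) := by linarith
      rw [← mul_le_mul_iff_right₀ h2N]
      calc 2 * (N:ℝ) * (((t : ℝ) + 1 / (2 * N)) * n)
          = 2 * (N:ℝ) * (t:ℝ) * n + n := by field_simp
        _ ≤ 2 * N * (Sf : ℝ) := hZr
        _ = 2 * (N:ℝ) * ((Sf : ℝ)) := by ring

end Core6
end ARP

namespace ARP
open Classical Filter
set_option linter.unusedSectionVars false
section App
variable {V : Type} [Fintype V]

/-- energy memory update -/
noncomputable def updE (w : V → V → Option ℤ) (cap : ℕ) (m : Fin (cap + 2)) (u v : V) :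
    Fin (cap + 2) :=
  if m.val = cap + 1 then m
  else
    match w u v with
    | none => ⟨cap, by omega⟩
    | some k =>
        if h : 0 ≤ (m.val : ℤ) + k ∧ (m.val : ℤ) + k ≤ (cap : ℤ) then
          ⟨((m.val : ℤ) + k).toNat, by omega⟩
        else ⟨cap + 1, by omega⟩

noncomputable def encE (cap : ℕ) (e : ℤ) : Fin (cap + 2) :=
  if h : 0 ≤ e ∧ e ≤ (cap : ℤ) then ⟨e.toNat, by omega⟩ else ⟨cap + 1, by omega⟩

noncomputable def memE (w : V → V → Option ℤ) (cap : ℕ) : Mem V (Fin (cap + 2)) :=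
  ⟨⟨cap, by omega⟩, updE w cap⟩

/-- the expanded arena tracking the energy -/
noncomputable def BP (A : Arena V) (w : V → V → Option ℤ) (cap : ℕ) :
    Arena (V × Fin (cap + 2)) where
  V0 := {p | p.1 ∈ A.V0}
  E := fun p q => A.E p.1 q.1 ∧ q.2 = updE w cap p.2 p.1 q.1
  vI := (A.vI, ⟨cap, by omega⟩)
  succ := fun p => by
    obtain ⟨v', h⟩ := A.succ p.1
    exact ⟨(v', updE w cap p.2 p.1 v'), h, rfl⟩

noncomputable def fE (cap t : ℕ) : V × Fin (cap + 2) → ℤ := fun s =>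
  if s.2.val = cap + 1 then (t : ℤ) + 1 else (s.2.val : ℤ)

lemma fE_nonneg (cap t : ℕ) (s : V × Fin (cap + 2)) : 0 ≤ fE cap t s := by
  rw [fE]
  split <;> omega

lemma updE_bust (w : V → V → Option ℤ) (cap : ℕ) (m : Fin (cap + 2))
    (hm : m.val = cap + 1) (u v : V) : updE w cap m u v = m := by
  rw [updE, if_pos hm]

lemma elcap_le (A : Arena V) (w : V → V → Option ℤ) (hw : RechargeWeights A w) (cap : ℕ)
    (ρ : ℕ → V) (hp : ∀ n, A.E (ρ n) (ρ (n + 1))) :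
    ∀ n, ELcap w cap ρ n ≤ (cap : ℤ) := by
  intro n
  induction n with
  | zero => rw [ELcap]
  | succ n ih =>
      rw [ELcap]
      cases hwk : w (ρ n) (ρ (n + 1)) with
      | none => simp
      | some k =>
          have hk : k ≤ 0 := hw (ρ n) (ρ (n + 1)) (hp n) k hwk
          simp only []
          omega

/-- generic: memory run on a prefix list equals tracking -/
lemma runAux_concat {M : Type} (mem : Mem V M) (m : M) (l : List V) (hl : l ≠ [])
    (d : V) (b : V) :
    mem.runAux m (l ++ [b]) = mem.upd (mem.runAux m l) (l.getLastD d) b := by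
  induction l generalizing m with
  | nil => exact absurd rfl hl
  | cons a l ih =>
      cases l with
      | nil => rfl
      | cons c l' =>
          show mem.runAux (mem.upd m a c) ((c :: l') ++ [b]) = _
          rw [ih (mem.upd m a c) (by simp)]
          rfl

lemma run_prefixList {M : Type} (mem : Mem V M) (ρ : ℕ → V) (n : ℕ) :
    mem.run (prefixList ρ n) = mem.track ρ n := by
  induction n with
  | zero => rfl
  | succ n ih =>
      rw [Mem.run, prefixList_succ,
        runAux_concat mem mem.mI (prefixList ρ n) (prefixList_ne_nil ρ n) (ρ 0),
        prefixList_getLastD]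
      rw [Mem.track, ← Mem.run, ih]

lemma encE_val (cap : ℕ) (e : ℤ) (h0 : 0 ≤ e) (hc : e ≤ (cap : ℤ)) :
    ((encE cap e).val : ℤ) = e ∧ (encE cap e).val ≠ cap + 1 := by
  rw [encE, dif_pos ⟨h0, hc⟩]
  constructor
  · simpa using Int.toNat_of_nonneg h0
  · simp only []
    omega

/-- along a valid play where the energy never goes negative,
the tracked memory is the encoded energy level -/
lemma track_eq_enc (A : Arena V) (w : V → V → Option ℤ) (hw : RechargeWeights A w) (cap : ℕ)
    (ρ : ℕ → V) (hp : ∀ n, A.E (ρ n) (ρ (n + 1)))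
    (hnn : ∀ n, 0 ≤ ELcap w cap ρ n) :
    ∀ n, (memE w cap).track ρ n = encE cap (ELcap w cap ρ n) := by
  intro n
  have hle := elcap_le A w hw cap ρ hp
  induction n with
  | zero =>
      show (⟨cap, by omega⟩ : Fin (cap + 2)) = encE cap (ELcap w cap ρ 0)
      rw [ELcap, encE, dif_pos ⟨by positivity, le_refl _⟩]
      apply Fin.ext
      simp
  | succ n ih =>
      show updE w cap ((memE w cap).track ρ n) (ρ n) (ρ (n + 1)) = _
      rw [ih]
      obtain ⟨hval, hnb⟩ := encE_val cap (ELcap w cap ρ n) (hnn n) (hle n)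
      rw [updE, if_neg hnb]
      rw [ELcap]
      cases hwk : w (ρ n) (ρ (n + 1)) with
      | none =>
          simp only []
          rw [encE, dif_pos ⟨by positivity, le_refl _⟩]
          apply Fin.ext
          simp
      | some k =>
          simp only []
          have hcond : 0 ≤ ((encE cap (ELcap w cap ρ n)).val : ℤ) + k ∧
              ((encE cap (ELcap w cap ρ n)).val : ℤ) + k ≤ (cap : ℤ) := by
            rw [hval]
            refine ⟨?_, ?_⟩
            · have := hnn (n + 1)
              rw [ELcap] at this
              rw [hwk] at this
              exact this
            · have := hle (n + 1)
              rw [ELcap] at this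
              rw [hwk] at this
              exact this
          rw [dif_pos hcond]
          have h2 : 0 ≤ ELcap w cap ρ n + k ∧ ELcap w cap ρ n + k ≤ (cap : ℤ) := by
            rw [hval] at hcond; exact hcond
          obtain ⟨hval2, _⟩ := encE_val cap (ELcap w cap ρ n + k) h2.1 h2.2
          apply Fin.ext
          show (((encE cap (ELcap w cap ρ n)).val : ℤ) + k).toNat = _
          omega

end App
end ARP

namespace ARP
open Classical Filter
set_option linter.unusedSectionVars false
section App2
variable {V : Type} [Fintype V]

lemma track_snd (A : Arena V) (w : V → V → Option ℤ) (cap : ℕ)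
    (π : ℕ → V × Fin (cap + 2)) (hplay : (BP A w cap).Play π) :
    ∀ n, (π n).2 = (memE w cap).track (fun k => (π k).1) n := by
  intro n
  induction n with
  | zero =>
      rw [hplay.1]
      rfl
  | succ n ih =>
      have := (hplay.2 n).2
      rw [this, ih]
      rfl

lemma bust_forever (w : V → V → Option ℤ) (cap : ℕ) (ρ : ℕ → V) (n0 : ℕ)
    (hb : ((memE w cap).track ρ n0).val = cap + 1) :
    ∀ n, n0 ≤ n → ((memE w cap).track ρ n).val = cap + 1 := by
  intro n hn
  induction n with
  | zero =>
      have : n0 = 0 := Nat.le_zero.1 hn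
      rwa [this] at hb
  | succ n ih =>
      rcases Nat.lt_or_ge n0 (n + 1) with h1 | h1
      · have hn' : n0 ≤ n := Nat.lt_succ_iff.1 h1
        have := ih hn'
        show (updE w cap ((memE w cap).track ρ n) (ρ n) (ρ (n + 1))).val = cap + 1
        rw [updE_bust w cap _ this]
        exact this
      · have : n0 = n + 1 := le_antisymm hn h1
        rwa [this] at hb

lemma track_enc_of_nobust (A : Arena V) (w : V → V → Option ℤ) (hw : RechargeWeights A w)
    (cap : ℕ) (ρ : ℕ → V) (hp : ∀ n, A.E (ρ n) (ρ (n + 1)))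
    (hnb : ∀ n, ((memE w cap).track ρ n).val ≠ cap + 1) :
    ∀ n, (memE w cap).track ρ n = encE cap (ELcap w cap ρ n) ∧ 0 ≤ ELcap w cap ρ n := by
  have hle := elcap_le A w hw cap ρ hp
  intro n
  induction n with
  | zero =>
      constructor
      · show (⟨cap, by omega⟩ : Fin (cap + 2)) = encE cap (ELcap w cap ρ 0)
        rw [ELcap, encE, dif_pos ⟨by positivity, le_refl _⟩]
        apply Fin.ext
        simp
      · rw [ELcap]
        positivity
  | succ n ih =>
      obtain ⟨henc, hnn⟩ := ih
      obtain ⟨hval, hnbust⟩ := encE_val cap (ELcap w cap ρ n) hnn (hle n)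
      have hstep : (memE w cap).track ρ (n + 1)
          = updE w cap (encE cap (ELcap w cap ρ n)) (ρ n) (ρ (n + 1)) := by
        rw [← henc]
        rfl
      rw [hstep, updE, if_neg hnbust]
      cases hwk : w (ρ n) (ρ (n + 1)) with
      | none =>
          simp only []
          have hE : ELcap w cap ρ (n + 1) = (cap : ℤ) := by
            rw [ELcap, hwk]
          rw [hE]
          constructor
          · rw [encE, dif_pos ⟨by positivity, le_refl _⟩]
            apply Fin.ext
            simp
          · positivity
      | some k =>
          simp only []
          have hE : ELcap w cap ρ (n + 1) = ELcap w cap ρ n + k := by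
            rw [ELcap, hwk]
          by_cases hcond : 0 ≤ ((encE cap (ELcap w cap ρ n)).val : ℤ) + k ∧
              ((encE cap (ELcap w cap ρ n)).val : ℤ) + k ≤ (cap : ℤ)
          · rw [dif_pos hcond]
            have h2 : 0 ≤ ELcap w cap ρ n + k ∧ ELcap w cap ρ n + k ≤ (cap : ℤ) := by
              rw [hval] at hcond; exact hcond
            obtain ⟨hval2, _⟩ := encE_val cap (ELcap w cap ρ n + k) h2.1 h2.2
            constructor
            · rw [hE]
              apply Fin.ext
              show (((encE cap (ELcap w cap ρ n)).val : ℤ) + k).toNat = _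
              omega
            · rw [hE]; exact h2.1
          · exfalso
            apply hnb (n + 1)
            rw [hstep, updE, if_neg hnbust, hwk]
            simp only []
            rw [dif_neg hcond]

/-- the strategy of the expanded game induced by `σ0` -/
noncomputable def sigp (A : Arena V) (w : V → V → Option ℤ) (cap : ℕ) (σ0 : List V → V) :
    List (V × Fin (cap + 2)) → V × Fin (cap + 2) := fun h =>
  let x := h.getLastD ((BP A w cap).vI)
  let v' := σ0 (h.map Prod.fst)
  (v', updE w cap x.2 x.1 v')

lemma sigp_strategy (A : Arena V) (w : V → V → Option ℤ) (cap : ℕ) (σ0 : List V → V)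
    (hs : A.IsStrategy A.V0 σ0) :
    (BP A w cap).IsStrategy (BP A w cap).V0 (sigp A w cap σ0) := by
  intro h v hv
  obtain ⟨u, m⟩ := v
  have hu : u ∈ A.V0 := hv
  show (BP A w cap).E (u, m) (sigp A w cap σ0 (h ++ [(u, m)]))
  have h1 : (h ++ [(u, m)]).getLastD ((BP A w cap).vI) = (u, m) := List.getLastD_concat
  have h2 : (h ++ [(u, m)]).map Prod.fst = h.map Prod.fst ++ [u] := by simp
  rw [sigp]
  simp only [h1, h2]
  exact ⟨hs (h.map Prod.fst) u hu, rfl⟩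

end App2
end ARP

namespace ARP
open Classical Filter
set_option linter.unusedSectionVars false
section App3
variable {V : Type} [Fintype V]

lemma avgS_eq_avgELcap (w : V → V → Option ℤ) (cap t : ℕ) (π : ℕ → V × Fin (cap + 2))
    (ρ : ℕ → V) (hfe : ∀ n, fE cap t (π n) = ELcap w cap ρ n) (n : ℕ) :
    avgS (fE cap t) π n = avgELcap w cap ρ n := by
  rw [avgS, avgELcap]
  congr 1
  push_cast
  exact Finset.sum_congr rfl fun i _ => by exact_mod_cast congrArg Int.cast (hfe i)

lemma nobust_of_limsup (cap t : ℕ) (π : ℕ → V × Fin (cap + 2))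
    (habs : ∀ n m, n ≤ m → (π n).2.val = cap + 1 → (π m).2.val = cap + 1)
    (b : ℝ) (hbt : b ≤ (t : ℝ))
    (hlim : limsup (fun n => ((avgS (fE cap t) π n : ℝ) : EReal)) atTop ≤ ((b : ℝ) : EReal)) :
    ∀ n, (π n).2.val ≠ cap + 1 := by
  intro n0 hb
  refine not_limsup_le_of_eventually_ge (fun n => avgS (fE cap t) π n) b ((t : ℝ) + 1/2)
    (by linarith) ?_ hlim
  filter_upwards [eventually_ge_atTop (max (max 1 n0) (2 * n0 * (t + 1)))] with n hn
  have hn1 : 1 ≤ n := le_trans (le_trans (le_max_left 1 n0) (le_max_left _ _)) hn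
  have hn0 : n0 ≤ n := le_trans (le_trans (le_max_right 1 n0) (le_max_left _ _)) hn
  have hn2 : 2 * n0 * (t + 1) ≤ n := le_trans (le_max_right _ _) hn
  -- integer sum bound
  have hsub : Finset.Ico n0 n ⊆ Finset.range n := by
    intro i hi
    rw [Finset.mem_range]
    exact (Finset.mem_Ico.1 hi).2
  have hsum1 : (∑ i ∈ Finset.Ico n0 n, fE cap t (π i)) ≤ ∑ i ∈ Finset.range n, fE cap t (π i) :=
    Finset.sum_le_sum_of_subset_of_nonneg hsub (fun i _ _ => fE_nonneg cap t (π i))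
  have hsum2 : (∑ i ∈ Finset.Ico n0 n, fE cap t (π i)) = ((n - n0 : ℕ) : ℤ) * ((t : ℤ) + 1) := by
    rw [Finset.sum_congr rfl (fun i hi => ?_), Finset.sum_const, Nat.card_Ico, nsmul_eq_mul]
    have hbust := habs n0 i (Finset.mem_Ico.1 hi).1 hb
    rw [fE, if_pos hbust]
  have hsum3 : ((n : ℤ) - n0) * ((t : ℤ) + 1) ≤ ∑ i ∈ Finset.range n, fE cap t (π i) := by
    have : ((n - n0 : ℕ) : ℤ) = (n : ℤ) - n0 := by omega
    rw [← this]
    omega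
  -- conclude the real bound
  have hnpos : (0 : ℝ) < (n : ℝ) := by exact_mod_cast hn1
  show (t : ℝ) + 1/2 ≤ avgS (fE cap t) π n
  rw [avgS, le_div_iff₀ hnpos]
  set Sf : ℤ := ∑ i ∈ Finset.range n, fE cap t (π i) with hSf
  have hZ : 2 * (t : ℤ) * n + n ≤ 2 * Sf := by
    set T : ℤ := (t : ℤ) + 1 with hT
    have e1 : 2 * ((n : ℤ) - n0) * T ≤ 2 * Sf := by linarith [hsum3]
    have e2 : 2 * ((n : ℤ) - n0) * T = 2 * ((n:ℤ) * T) - 2 * ((n0:ℤ) * T) := by ring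
    have e3 : 2 * ((n0 : ℤ) * T) ≤ (n : ℤ) := by
      have := hn2
      have hc : ((2 * n0 * (t + 1) : ℕ) : ℤ) ≤ (n : ℤ) := by exact_mod_cast this
      have : ((2 * n0 * (t + 1) : ℕ) : ℤ) = 2 * ((n0 : ℤ) * T) := by
        rw [hT]; push_cast; ring
      omega
    have e4 : 2 * ((n:ℤ) * T) = 2 * (t:ℤ) * n + 2 * n := by rw [hT]; ring
    omega
  have hZr : 2 * (t : ℝ) * n + n ≤ 2 * (Sf : ℝ) := by exact_mod_cast hZ
  nlinarith [hZr]

end App3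
end ARP

/-- If Player 0 wins the average-bounded recharge game, then she
wins it with a finite-state strategy of size `cap + 2`. -/
theorem avgRecharge_finiteState_strategy {V : Type} [Fintype V] (A : Arena V)
    (w : V → V → Option ℤ) (hw : RechargeWeights A w) (cap t : ℕ)
    (h : A.Player0Wins (AvgRecharge w cap (t : ℝ))) :
    ∃ σ : List V → V, A.WinningStrategy A.V0 (AvgRecharge w cap (t : ℝ)) σ ∧
      A.FiniteStateOfSize (cap + 2) σ := by
  classical
  obtain ⟨σ0, hstrat0, hwin0⟩ := h
  -- transfer to the expanded game
  have hwinp : ∀ π, (ARP.BP A w cap).Play π →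
      (ARP.BP A w cap).ConsistentWith (ARP.BP A w cap).V0 (ARP.sigp A w cap σ0) π →
      Filter.limsup (fun n => ((ARP.avgS (ARP.fE cap t) π n : ℝ) : EReal)) Filter.atTop
        ≤ (((((t : ℕ) : ℤ) : ℝ) : ℝ) : EReal) := by
    intro π hplay hcons
    set ρ : ℕ → V := fun n => (π n).1 with hρdef
    have hplayA : A.Play ρ := by
      constructor
      · show (π 0).1 = A.vI
        rw [hplay.1]
        rfl
      · exact fun n => (hplay.2 n).1
    have hconsA : A.ConsistentWith A.V0 σ0 ρ := by
      intro n hv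
      have hstep := hcons n hv
      show (π (n + 1)).1 = σ0 (prefixList ρ n)
      rw [hstep, ARP.sigp]
      simp only []
      congr 1
      rw [ARP.prefixList_map]
    have hmem := hwin0 ρ hplayA hconsA
    have hl : Filter.limsup (fun n => ((avgELcap w cap ρ n : ℝ) : EReal)) Filter.atTop
        ≤ (((t : ℕ) : ℝ) : EReal) := hmem.1
    have hrech : ∀ n, 0 ≤ ELcap w cap ρ n := hmem.2
    have htrack := ARP.track_snd A w cap π hplay
    have henc := ARP.track_eq_enc A w hw cap ρ (fun n => (hplay.2 n).1) hrech
    have hle := ARP.elcap_le A w hw cap ρ (fun n => (hplay.2 n).1)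
    have hfe : ∀ n, ARP.fE cap t (π n) = ELcap w cap ρ n := by
      intro n
      obtain ⟨hval, hnb⟩ := ARP.encE_val cap (ELcap w cap ρ n) (hrech n) (hle n)
      rw [ARP.fE]
      have h2 : (π n).2 = ARP.encE cap (ELcap w cap ρ n) := by rw [htrack n, henc n]
      rw [h2, if_neg hnb, hval]
    have heq : (fun n => ((ARP.avgS (ARP.fE cap t) π n : ℝ) : EReal))
        = (fun n => ((avgELcap w cap ρ n : ℝ) : EReal)) := by
      funext n
      rw [ARP.avgS_eq_avgELcap w cap t π ρ hfe n]
    rw [heq]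
    convert hl using 2
    simp
  obtain ⟨pos, hposE, hposW⟩ := ARP.core (ARP.BP A w cap) (ARP.fE cap t) ((t : ℕ) : ℤ)
    (ARP.sigp A w cap σ0) (ARP.sigp_strategy A w cap σ0 hstrat0) hwinp
  set nxt : V → Fin (cap + 2) → V := fun v m => (pos (v, m)).1 with hnxt
  set σfin : List V → V := fun l => nxt (l.getLastD A.vI) ((ARP.memE w cap).run l) with hσfin
  have himpl : ∀ (l : List V) (v : V),
      σfin (l ++ [v]) = nxt v ((ARP.memE w cap).run (l ++ [v])) := by
    intro l v
    rw [hσfin]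
    simp only []
    rw [List.getLastD_concat]
  refine ⟨σfin, ⟨?_, ?_⟩, ?_⟩
  · -- legality
    intro l v hv
    rw [himpl]
    exact (hposE (v, (ARP.memE w cap).run (l ++ [v]))).1
  · -- winning
    intro ρ hp hc
    set π : ℕ → V × Fin (cap + 2) := fun n => (ρ n, (ARP.memE w cap).track ρ n) with hπ
    have hplayπ : (ARP.BP A w cap).Play π := by
      constructor
      · show (ρ 0, (ARP.memE w cap).track ρ 0) = (A.vI, _)
        rw [hp.1]
        rfl
      · exact fun n => ⟨hp.2 n, rfl⟩
    have hconsπ : ∀ n, π n ∈ (ARP.BP A w cap).V0 → π (n + 1) = pos (π n) := by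
      intro n hv
      have h1 : ρ (n + 1) = (pos (π n)).1 := by
        have h2 := hc n hv
        rw [h2, hσfin]
        simp only []
        rw [ARP.prefixList_getLastD, ARP.run_prefixList]
      have h2 := (hposE (π n)).2
      have h3 : (ARP.memE w cap).track ρ (n + 1)
          = ARP.updE w cap ((ARP.memE w cap).track ρ n) (ρ n) (ρ (n + 1)) := rfl
      have hsnd : (ARP.memE w cap).track ρ (n + 1) = (pos (π n)).2 := by
        rw [h3, h2, h1]
      calc π (n + 1) = (ρ (n + 1), (ARP.memE w cap).track ρ (n + 1)) := rfl
        _ = ((pos (π n)).1, (pos (π n)).2) := by rw [h1, hsnd]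
        _ = pos (π n) := rfl
    have hlim := hposW π hplayπ hconsπ
    have hnb : ∀ n, ((ARP.memE w cap).track ρ n).val ≠ cap + 1 := by
      have habs : ∀ n m, n ≤ m → (π n).2.val = cap + 1 → (π m).2.val = cap + 1 :=
        fun n m hnm hb => ARP.bust_forever w cap ρ n hb m hnm
      exact fun n => ARP.nobust_of_limsup cap t π habs (((t : ℕ) : ℤ) : ℝ)
        (by norm_cast) hlim n
    have henc := ARP.track_enc_of_nobust A w hw cap ρ hp.2 hnb
    have hrech : ρ ∈ Recharge w cap := fun n => (henc n).2
    have hle := ARP.elcap_le A w hw cap ρ hp.2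
    have hfe : ∀ n, ARP.fE cap t (π n) = ELcap w cap ρ n := by
      intro n
      obtain ⟨hval, hnb2⟩ := ARP.encE_val cap (ELcap w cap ρ n) ((henc n).2) (hle n)
      rw [ARP.fE]
      have h2 : (π n).2 = ARP.encE cap (ELcap w cap ρ n) := (henc n).1
      rw [h2, if_neg hnb2, hval]
    refine ⟨?_, hrech⟩
    show Filter.limsup (fun n => ((avgELcap w cap ρ n : ℝ) : EReal)) Filter.atTop
        ≤ (((t : ℕ) : ℝ) : EReal)
    have heq : (fun n => ((avgELcap w cap ρ n : ℝ) : EReal))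
        = (fun n => ((ARP.avgS (ARP.fE cap t) π n : ℝ) : EReal)) := by
      funext n
      rw [ARP.avgS_eq_avgELcap w cap t π ρ hfe n]
    rw [heq]
    convert hlim using 2
    simp
  · -- finite-state of size cap + 2
    exact ⟨Fin (cap + 2), inferInstance, ARP.memE w cap, by simp,
      ⟨nxt, fun l v => himpl l v⟩⟩
end

section
/- Consider the arena A with V1 = {v_0}, V0 = {v_1}, initial vertex v_0, and edges (v_0, v_1) with weight −1, (v_1, v_1) with weight −1, and (v_1, v_0) labelled R. For every cap ∈ ℕ and every n with 1 ≤ n ≤ cap, the ultimately periodic play (v_0 v_1^n)^ω lies in Recharge(w, cap) and its long-run average recharge energy limsup_{k→∞} (1/k) Σ_{i=0}^{k−1} EL_cap(ρ_0⋯ρ_i) equals cap − n/2. In particular, for even cap, the play (v_0 v_1^cap)^ω lies in AvgRecharge(w, cap, cap/2), while for n < cap the play (v_0 v_1^n)^ω has long-run average cap − n/2 > cap/2. -/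
/-- The arena with Player 1's vertex `v₀ = 0`, Player 0's vertex `v₁ = 1`, initial
vertex `v₀`, and edges `(v₀,v₁)`, `(v₁,v₁)` and `(v₁,v₀)`. -/
def memTradeArena : Arena (Fin 2) where
  V0 := {1}
  E := fun u v => (u = 0 ∧ v = 1) ∨ u = 1
  vI := 0
  succ := fun u => ⟨1, by fin_cases u <;> simp⟩

/-- The recharge weight function: `(v₀,v₁)` and `(v₁,v₁)` have weight `-1`, and
`(v₁,v₀)` is labelled `R`. -/
def memTradeW : Fin 2 → Fin 2 → Option ℤ :=
  fun u v => if u = 1 ∧ v = 0 then none else some (-1)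

/-- The play `(v₀ v₁ⁿ)^ω`. -/
def memTradePlay (n : ℕ) : ℕ → Fin 2 :=
  fun k => if k % (n + 1) = 0 then 0 else 1

private lemma modSucc (n k : ℕ) (hn : 1 ≤ n) :
    ((k+1) % (n+1) = 0 ∧ k % (n+1) = n) ∨
    ((k+1) % (n+1) = k % (n+1) + 1 ∧ k % (n+1) < n) := by
  have hlt : k % (n+1) < n+1 := Nat.mod_lt _ (Nat.succ_pos n)
  have key : (k+1) % (n+1) = (k % (n+1) + 1) % (n+1) := by
    conv_lhs => rw [Nat.add_mod]
    rw [Nat.mod_eq_of_lt (show 1 < n+1 by omega)]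
  rcases eq_or_lt_of_le (Nat.le_of_lt_succ hlt) with h | h
  · exact Or.inl ⟨by rw [key, h, Nat.mod_self], h⟩
  · exact Or.inr ⟨by rw [key, Nat.mod_eq_of_lt (by omega)], by omega⟩

private lemma sumMod (n k : ℕ) (hn : 1 ≤ n) :
    2 * ∑ i ∈ Finset.range k, ((i % (n+1) : ℕ) : ℤ)
      = ((k : ℤ) - ((k % (n+1) : ℕ) : ℤ)) * n
        + ((k % (n+1) : ℕ) : ℤ) * (((k % (n+1) : ℕ) : ℤ) - 1) := by
  induction k with
  | zero => simp
  | succ k ih =>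
    rw [Finset.sum_range_succ, mul_add]
    rcases modSucc n k hn with ⟨h1, h2⟩ | ⟨h1, h2⟩
    · rw [h2] at ih ⊢
      rw [h1]
      simp only [Nat.cast_add, Nat.cast_one, Nat.cast_zero]
      linear_combination ih
    · rw [h1]
      simp only [Nat.cast_add, Nat.cast_one, Nat.cast_zero]
      linear_combination ih

private lemma elcapEq (cap n : ℕ) (hn : 1 ≤ n) (k : ℕ) :
    ELcap memTradeW cap (memTradePlay n) k = (cap : ℤ) - ((k % (n+1) : ℕ) : ℤ) := by
  induction k with
  | zero => simp [ELcap]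
  | succ k ih =>
    rcases modSucc n k hn with ⟨h1, h2⟩ | ⟨h1, h2⟩
    · have hρk : memTradePlay n k = 1 := by
        unfold memTradePlay; rw [h2, if_neg (by omega)]
      have hρk1 : memTradePlay n (k+1) = 0 := by
        unfold memTradePlay; rw [h1, if_pos rfl]
      simp [ELcap, hρk, hρk1, memTradeW, h1]
    · have hρk1 : memTradePlay n (k+1) = 1 := by
        unfold memTradePlay; rw [h1, if_neg (by omega)]
      have hw : memTradeW (memTradePlay n k) (memTradePlay n (k+1)) = some (-1) := by
        rw [hρk1]; unfold memTradeW; rw [if_neg (by simp)]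
      show (match memTradeW (memTradePlay n k) (memTradePlay n (k+1)) with
        | none => (cap : ℤ)
        | some m => ELcap memTradeW cap (memTradePlay n) k + m) = _
      rw [hw, ih, h1]
      push_cast
      ring

/-- For `1 ≤ n ≤ cap`, the play `(v₀ v₁ⁿ)^ω` lies in
`Recharge(w,cap)` and its long-run average recharge energy equals `cap - n/2`. In
particular, for even `cap` the play `(v₀ v₁^cap)^ω` lies in
`AvgRecharge(w,cap,cap/2)`, while for `n < cap` the long-run average
`cap - n/2` exceeds `cap/2`. -/
theorem memTrade_play_average (cap n : ℕ) (h1 : 1 ≤ n) (h2 : n ≤ cap) :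
    memTradeArena.Play (memTradePlay n) ∧
    memTradePlay n ∈ Recharge memTradeW cap ∧
    Filter.limsup (fun k => (avgELcap memTradeW cap (memTradePlay n) k : EReal))
      Filter.atTop = (((cap : ℝ) - (n : ℝ) / 2 : ℝ) : EReal) ∧
    (Even cap → n = cap →
      memTradePlay n ∈ AvgRecharge memTradeW cap ((cap : ℝ) / 2)) ∧
    (n < cap → (cap : ℝ) / 2 < (cap : ℝ) - (n : ℝ) / 2) := by
  have hmodle : ∀ k : ℕ, k % (n+1) ≤ n := fun k => Nat.le_of_lt_succ (Nat.mod_lt _ (Nat.succ_pos n))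
  -- Play
  have hPlay : memTradeArena.Play (memTradePlay n) := by
    constructor
    · simp [memTradePlay, memTradeArena]
    · intro k
      show (memTradePlay n k = 0 ∧ memTradePlay n (k+1) = 1) ∨ memTradePlay n k = 1
      by_cases h : k % (n+1) = 0
      · left
        refine ⟨by simp [memTradePlay, h], ?_⟩
        rcases modSucc n k h1 with ⟨ha, hb⟩ | ⟨ha, hb⟩
        · omega
        · unfold memTradePlay; rw [ha, if_neg (by omega)]
      · right; simp [memTradePlay, h]
  -- Recharge
  have hRech : memTradePlay n ∈ Recharge memTradeW cap := by
    intro k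
    rw [elcapEq cap n h1 k]
    have := hmodle k
    have hc : ((k % (n+1) : ℕ) : ℤ) ≤ (cap : ℤ) := by exact_mod_cast le_trans this h2
    omega
  -- the limit
  set c : ℝ := (cap : ℝ) - (n : ℝ) / 2 with hc
  have sumR : ∀ k : ℕ, 2 * ∑ i ∈ Finset.range k, ((i % (n+1) : ℕ) : ℝ)
      = ((k : ℝ) - ((k % (n+1) : ℕ) : ℝ)) * n
        + ((k % (n+1) : ℕ) : ℝ) * (((k % (n+1) : ℕ) : ℝ) - 1) := by
    intro k
    have hz := congrArg (fun z : ℤ => (z : ℝ)) (sumMod n k h1)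
    simp only [Int.cast_mul, Int.cast_add, Int.cast_sub, Int.cast_sum, Int.cast_ofNat, Int.cast_natCast, Int.cast_one] at hz
    convert hz using 2 <;> push_cast <;> ring
  have hS : ∀ k : ℕ, ∑ i ∈ Finset.range k, ((ELcap memTradeW cap (memTradePlay n) i : ℝ))
      = (k : ℝ) * cap - ∑ i ∈ Finset.range k, ((i % (n+1) : ℕ) : ℝ) := by
    intro k
    have : ∀ i ∈ Finset.range k, ((ELcap memTradeW cap (memTradePlay n) i : ℝ))
        = (cap : ℝ) - ((i % (n+1) : ℕ) : ℝ) := by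
      intro i _
      rw [elcapEq cap n h1 i, Int.cast_sub, Int.cast_natCast, Int.cast_natCast]
    rw [Finset.sum_congr rfl this, Finset.sum_sub_distrib, Finset.sum_const,
      Finset.card_range, nsmul_eq_mul]
  have key : ∀ k : ℕ, 1 ≤ k →
      avgELcap memTradeW cap (memTradePlay n) k - c
        = (((k % (n+1) : ℕ) : ℝ) * ((n : ℝ) - ((k % (n+1) : ℕ) : ℝ) + 1)) / (2 * k) := by
    intro k hk
    have hk0 : (k : ℝ) ≠ 0 := by positivity
    unfold avgELcap
    rw [hS k, hc]
    field_simp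
    linear_combination (-1 : ℝ) * sumR k
  have hbound : ∀ k : ℕ, 1 ≤ k →
      ‖avgELcap memTradeW cap (memTradePlay n) k - c‖ ≤ ((n : ℝ) + 1)^2 / k := by
    intro k hk
    rw [key k hk, Real.norm_eq_abs]
    have hk0 : (0 : ℝ) < k := by positivity
    have hr0 : (0 : ℝ) ≤ ((k % (n+1) : ℕ) : ℝ) := Nat.cast_nonneg _
    have hrn : ((k % (n+1) : ℕ) : ℝ) ≤ (n : ℝ) := by exact_mod_cast hmodle k
    have hnum : (0 : ℝ) ≤ ((k % (n+1) : ℕ) : ℝ) * ((n : ℝ) - ((k % (n+1) : ℕ) : ℝ) + 1) :=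
      mul_nonneg hr0 (by linarith)
    rw [abs_of_nonneg (div_nonneg hnum (by linarith))]
    rw [div_le_div_iff₀ (by linarith) hk0]
    have hmm : ((k % (n+1) : ℕ) : ℝ) * ((n : ℝ) - ((k % (n+1) : ℕ) : ℝ) + 1)
        ≤ ((n : ℝ) + 1) * ((n : ℝ) + 1) :=
      mul_le_mul (by linarith) (by linarith) (by linarith) (by linarith)
    nlinarith [mul_le_mul_of_nonneg_right hmm hk0.le, sq_nonneg ((n : ℝ) + 1)]
  have htend0 : Filter.Tendsto (fun k : ℕ => avgELcap memTradeW cap (memTradePlay n) k - c)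
      Filter.atTop (nhds 0) :=
    squeeze_zero_norm' (Filter.eventually_atTop.2 ⟨1, hbound⟩)
      (tendsto_const_div_atTop_nhds_zero_nat _)
  have htend : Filter.Tendsto (fun k : ℕ => avgELcap memTradeW cap (memTradePlay n) k)
      Filter.atTop (nhds c) := tendsto_sub_nhds_zero_iff.mp htend0
  have htendE : Filter.Tendsto (fun k : ℕ => ((avgELcap memTradeW cap (memTradePlay n) k : ℝ) : EReal))
      Filter.atTop (nhds ((c : ℝ) : EReal)) := EReal.tendsto_coe.mpr htend
  have hlim : Filter.limsup (fun k => (avgELcap memTradeW cap (memTradePlay n) k : EReal))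
      Filter.atTop = ((c : ℝ) : EReal) := htendE.limsup_eq
  refine ⟨hPlay, hRech, hlim, ?_, ?_⟩
  · intro hcap hnc
    refine ⟨?_, hRech⟩
    show Filter.limsup (fun k => (avgELcap memTradeW cap (memTradePlay n) k : EReal))
      Filter.atTop ≤ (((cap : ℝ) / 2 : ℝ) : EReal)
    rw [hlim]
    have : c = (cap : ℝ) / 2 := by
      rw [hc, hnc]; ring
    rw [this]
  · intro h
    have : (n : ℝ) < (cap : ℝ) := by exact_mod_cast h
    linarith
end

section
/- Consider the arena A with V1 = {v_0}, V0 = {v_1}, initial vertex v_0, and edges (v_0, v_1) with weight −1, (v_1, v_1) with weight −1, and (v_1, v_0) labelled R. Let cap ∈ ℕ be even with cap ≥ 2 and t = cap/2. Then Player 0 has a winning strategy for (A, AvgRecharge(w, cap, t)) that is finite-state of size cap, but Player 0 has no winning strategy for (A, AvgRecharge(w, cap, t)) that is finite-state of size n for any n < cap. -/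
/-! ### Auxiliary lemmas for `memTrade_memory_requirement` -/

private lemma fin2cases (v : Fin 2) : v = 0 ∨ v = 1 := by fin_cases v <;> simp

private lemma prefixList_as_concat {V : Type} (ρ : ℕ → V) (k : ℕ) :
    prefixList ρ k = ((List.range k).map ρ) ++ [ρ k] := by
  simp [prefixList, List.range_succ]

private lemma runAux_snoc2 {V M : Type} (mem : Mem V M) (a b : V) :
    ∀ (l : List V) (m : M),
      mem.runAux m (l ++ [a, b]) = mem.upd (mem.runAux m (l ++ [a])) a b := by
  intro l
  induction l with
  | nil => intro m; simp [Mem.runAux]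
  | cons c l' ih =>
    intro m
    cases l' with
    | nil => simp [Mem.runAux]
    | cons d l'' =>
      have := ih (mem.upd m c d)
      simpa [Mem.runAux] using this

private lemma run_prefixList_succ {V M : Type} (mem : Mem V M) (ρ : ℕ → V) (k : ℕ) :
    mem.run (prefixList ρ (k + 1)) = mem.upd (mem.run (prefixList ρ k)) (ρ k) (ρ (k + 1)) := by
  have h1 : prefixList ρ (k + 1) = ((List.range k).map ρ) ++ [ρ k, ρ (k + 1)] := by
    simp [prefixList, List.range_succ]
  rw [h1, prefixList_as_concat ρ k, Mem.run, Mem.run, runAux_snoc2]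

private lemma succ_mod (c k : ℕ) (hc : 1 ≤ c) :
    (k + 1) % (c + 1) = if k % (c + 1) = c then 0 else k % (c + 1) + 1 := by
  have hr : k % (c + 1) < c + 1 := Nat.mod_lt _ (by omega)
  rw [Nat.add_mod k 1]
  have h1 : 1 % (c + 1) = 1 := Nat.mod_eq_of_lt (by omega)
  rw [h1]
  split
  · next h => rw [h]; exact Nat.mod_self _
  · next h => exact Nat.mod_eq_of_lt (by omega)

private def capPos (cap : ℕ) [NeZero cap] : 0 < cap := Nat.pos_of_ne_zero (NeZero.ne cap)

private def mtMem (cap : ℕ) [NeZero cap] : Mem (Fin 2) (Fin cap) where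
  mI := ⟨0, capPos cap⟩
  upd := fun m _ v => if v = 0 then ⟨0, capPos cap⟩ else ⟨(m.val + 1) % cap, Nat.mod_lt _ (capPos cap)⟩

private def mtNxt (cap : ℕ) [NeZero cap] : Fin 2 → Fin cap → Fin 2 :=
  fun v m => if v = 1 ∧ m.val = 0 then 0 else 1

private lemma mtMem_upd_val0 (cap : ℕ) [NeZero cap] (m : Fin cap) (u : Fin 2) :
    ((mtMem cap).upd m u 0).val = 0 := by
  simp [mtMem]

private lemma mtMem_upd_val1 (cap : ℕ) [NeZero cap] (m : Fin cap) (u : Fin 2) :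
    ((mtMem cap).upd m u 1).val = (m.val + 1) % cap := by
  simp [mtMem]

private def mtσ (cap : ℕ) [NeZero cap] : List (Fin 2) → Fin 2 :=
  fun h => match h.getLast? with
    | some v => mtNxt cap v ((mtMem cap).run h)
    | none => 1

private lemma mtσ_concat (cap : ℕ) [NeZero cap] (h : List (Fin 2)) (v : Fin 2) :
    mtσ cap (h ++ [v]) = mtNxt cap v ((mtMem cap).run (h ++ [v])) := by
  have : (h ++ [v]).getLast? = some v := by
    rw [List.getLast?_concat]
  simp [mtσ, this]

private lemma part1_shape (cap : ℕ) [NeZero cap] (h2 : 2 ≤ cap) (ρ : ℕ → Fin 2)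
    (hP : memTradeArena.Play ρ)
    (hC : memTradeArena.ConsistentWith memTradeArena.V0 (mtσ cap) ρ) :
    ∀ k, (ρ k = if k % (cap + 1) = 0 then 0 else 1) ∧
      ((mtMem cap).run (prefixList ρ k)).val = (k % (cap + 1)) % cap := by
  have hforced : ∀ m, ρ m = 0 → ρ (m + 1) = 1 := by
    intro m h0
    rcases hP.2 m with ⟨_, h⟩ | h
    · exact h
    · rw [h0] at h; exact absurd h (by decide)
  have hcons : ∀ m, ρ m = 1 →
      ρ (m + 1) = mtNxt cap (ρ m) ((mtMem cap).run (prefixList ρ m)) := by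
    intro m h1
    have hmem : ρ m ∈ memTradeArena.V0 := h1
    have := hC m hmem
    rw [this, prefixList_as_concat ρ m, mtσ_concat]
  intro k
  induction k with
  | zero =>
    refine ⟨by simpa [memTradeArena] using hP.1, ?_⟩
    simp [prefixList, Mem.run, Mem.runAux, mtMem]
  | succ k ih =>
    obtain ⟨hρk, hμk⟩ := ih
    have hr : k % (cap + 1) < cap + 1 := Nat.mod_lt _ (by omega)
    have hsucc := succ_mod cap k (by omega)
    have hrun := run_prefixList_succ (mtMem cap) ρ k
    by_cases h0 : k % (cap + 1) = 0
    · -- at v₀, forced to v₁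
      have hρk0 : ρ k = 0 := by rw [hρk, if_pos h0]
      have hρk1 : ρ (k + 1) = 1 := hforced k hρk0
      have hs : (k + 1) % (cap + 1) = 1 := by rw [hsucc, if_neg (by omega), h0]
      constructor
      · rw [hρk1, hs]; simp
      · rw [hrun, hρk1, mtMem_upd_val1, hμk, h0, hs]
        simp
    · -- at v₁
      have hρk1 : ρ k = 1 := by rw [hρk, if_neg h0]
      have hnx := hcons k hρk1
      rw [hρk1] at hnx
      by_cases hcap : k % (cap + 1) = cap
      · -- recharge
        have hμ0 : ((mtMem cap).run (prefixList ρ k)).val = 0 := by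
          rw [hμk, hcap, Nat.mod_self]
        have hρk10 : ρ (k + 1) = 0 := by
          rw [hnx, mtNxt, if_pos ⟨rfl, hμ0⟩]
        have hs : (k + 1) % (cap + 1) = 0 := by rw [hsucc, if_pos hcap]
        constructor
        · rw [hρk10, hs]; simp
        · rw [hrun, hρk10, mtMem_upd_val0, hs]
          simp
      · -- weight -1 step, stay at v₁
        have hμne : ((mtMem cap).run (prefixList ρ k)).val ≠ 0 := by
          rw [hμk, Nat.mod_eq_of_lt (by omega)]
          omega
        have hρk11 : ρ (k + 1) = 1 := by
          rw [hnx, mtNxt, if_neg (by simp [hμne])]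
        have hs : (k + 1) % (cap + 1) = k % (cap + 1) + 1 := by rw [hsucc, if_neg hcap]
        constructor
        · rw [hρk11, hs]; simp [h0]
        · rw [hrun, hρk11, mtMem_upd_val1, hμk, hs,
            Nat.mod_eq_of_lt (show k % (cap+1) < cap by omega)]

private lemma part1_ELcap (cap : ℕ) (h2 : 2 ≤ cap) (ρ : ℕ → Fin 2)
    (hshape : ∀ k, ρ k = if k % (cap + 1) = 0 then 0 else 1) :
    ∀ m, ELcap memTradeW cap ρ m = (cap : ℤ) - ((m % (cap + 1) : ℕ) : ℤ) := by
  intro m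
  induction m with
  | zero => simp [ELcap]
  | succ m ih =>
    have hsucc := succ_mod cap m (by omega)
    have hr : m % (cap + 1) < cap + 1 := Nat.mod_lt _ (by omega)
    by_cases hcap : m % (cap + 1) = cap
    · have hρm : ρ m = 1 := by rw [hshape m, if_neg (by omega)]
      have hρm1 : ρ (m + 1) = 0 := by
        rw [hshape (m + 1), if_pos (by rw [hsucc, if_pos hcap])]
      have hw : memTradeW (ρ m) (ρ (m + 1)) = none := by
        rw [hρm, hρm1, memTradeW, if_pos ⟨rfl, rfl⟩]
      have hs : (m + 1) % (cap + 1) = 0 := by rw [hsucc, if_pos hcap]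
      rw [ELcap, hw, hs]
      simp
    · have hρm1 : ρ (m + 1) = 1 := by
        rw [hshape (m + 1), if_neg (by rw [hsucc, if_neg hcap]; omega)]
      have hw : memTradeW (ρ m) (ρ (m + 1)) = some (-1) := by
        rw [hρm1, memTradeW, if_neg (by simp)]
      have hs : (m + 1) % (cap + 1) = m % (cap + 1) + 1 := by rw [hsucc, if_neg hcap]
      rw [ELcap, hw, ih, hs]
      push_cast
      ring

private lemma part1_sum (cap : ℕ) (h2 : 2 ≤ cap) (ρ : ℕ → Fin 2)
    (hEL : ∀ m, ELcap memTradeW cap ρ m = (cap : ℤ) - ((m % (cap + 1) : ℕ) : ℤ)) :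
    ∀ m, 2 * (∑ i ∈ Finset.range m, ELcap memTradeW cap ρ i) =
      (m : ℤ) * cap + ((m % (cap + 1) : ℕ) : ℤ) * ((cap : ℤ) + 1 - ((m % (cap + 1) : ℕ) : ℤ)) := by
  intro m
  induction m with
  | zero => simp
  | succ m ih =>
    rw [Finset.sum_range_succ, mul_add, ih, hEL m]
    have hr : m % (cap + 1) < cap + 1 := Nat.mod_lt _ (by omega)
    have hsucc := succ_mod cap m (by omega)
    rcases eq_or_ne (m % (cap + 1)) cap with h | h
    · have hs : (m + 1) % (cap + 1) = 0 := by rw [hsucc, if_pos h]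
      rw [hs, h]
      push_cast
      ring
    · have hs : (m + 1) % (cap + 1) = m % (cap + 1) + 1 := by rw [hsucc, if_neg h]
      rw [hs]
      push_cast
      ring

private lemma part1_tendsto (cap : ℕ) (h2 : 2 ≤ cap) (ρ : ℕ → Fin 2)
    (hEL : ∀ m, ELcap memTradeW cap ρ m = (cap : ℤ) - ((m % (cap + 1) : ℕ) : ℤ)) :
    Filter.Tendsto (fun m => avgELcap memTradeW cap ρ m) Filter.atTop
      (nhds ((cap : ℝ) / 2)) := by
  have hsum := part1_sum cap h2 ρ hEL
  have key : ∀ m : ℕ, 1 ≤ m →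
      (cap : ℝ) / 2 ≤ avgELcap memTradeW cap ρ m ∧
      avgELcap memTradeW cap ρ m ≤ (cap : ℝ) / 2 + ((cap : ℝ) + 1) ^ 2 / 2 / m := by
    intro m hm
    have hmR : (0 : ℝ) < m := by exact_mod_cast hm
    have hS : (∑ i ∈ Finset.range m, ((ELcap memTradeW cap ρ i : ℤ) : ℝ)) =
        ((∑ i ∈ Finset.range m, ELcap memTradeW cap ρ i : ℤ) : ℝ) := by push_cast; rfl
    set Sz : ℤ := ∑ i ∈ Finset.range m, ELcap memTradeW cap ρ i with hSz
    have h1 : 2 * Sz = (m : ℤ) * cap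
        + ((m % (cap + 1) : ℕ) : ℤ) * ((cap : ℤ) + 1 - ((m % (cap + 1) : ℕ) : ℤ)) := hsum m
    have hr : m % (cap + 1) < cap + 1 := Nat.mod_lt _ (by omega)
    have hb1 : (0 : ℤ) ≤ ((m % (cap + 1) : ℕ) : ℤ) * ((cap : ℤ) + 1 - ((m % (cap + 1) : ℕ) : ℤ)) := by
      have h1' : (0 : ℤ) ≤ ((m % (cap + 1) : ℕ) : ℤ) := Int.natCast_nonneg _
      have h2' : ((m % (cap + 1) : ℕ) : ℤ) ≤ (cap : ℤ) + 1 := by exact_mod_cast hr.le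
      nlinarith
    have hb2 : ((m % (cap + 1) : ℕ) : ℤ) * ((cap : ℤ) + 1 - ((m % (cap + 1) : ℕ) : ℤ))
        ≤ ((cap : ℤ) + 1) ^ 2 := by
      have h1' : (0 : ℤ) ≤ ((m % (cap + 1) : ℕ) : ℤ) := Int.natCast_nonneg _
      have h2' : ((m % (cap + 1) : ℕ) : ℤ) ≤ (cap : ℤ) + 1 := by exact_mod_cast hr.le
      nlinarith
    have hlo : (m : ℤ) * cap ≤ 2 * Sz := by omega
    have hhi : 2 * Sz ≤ (m : ℤ) * cap + ((cap : ℤ) + 1) ^ 2 := by omega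
    have hloR : (m : ℝ) * cap ≤ 2 * (Sz : ℝ) := by exact_mod_cast hlo
    have hhiR : 2 * (Sz : ℝ) ≤ (m : ℝ) * cap + ((cap : ℝ) + 1) ^ 2 := by exact_mod_cast hhi
    unfold avgELcap
    rw [hS]
    constructor
    · rw [le_div_iff₀ hmR]; nlinarith
    · rw [div_le_iff₀ hmR]
      have : ((cap : ℝ) + 1) ^ 2 / 2 / m * m = ((cap : ℝ) + 1) ^ 2 / 2 := by
        field_simp
      nlinarith [this]
  have hup : Filter.Tendsto (fun m : ℕ => (cap : ℝ) / 2 + ((cap : ℝ) + 1) ^ 2 / 2 / m)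
      Filter.atTop (nhds ((cap : ℝ) / 2)) := by
    have := tendsto_const_div_atTop_nhds_zero_nat (((cap : ℝ) + 1) ^ 2 / 2)
    simpa using Filter.Tendsto.add (tendsto_const_nhds (x := (cap : ℝ) / 2)) this
  refine tendsto_of_tendsto_of_tendsto_of_le_of_le' tendsto_const_nhds hup ?_ ?_
  · exact Filter.eventually_atTop.mpr ⟨1, fun m hm => (key m hm).1⟩
  · exact Filter.eventually_atTop.mpr ⟨1, fun m hm => (key m hm).2⟩

private lemma part1_main (cap : ℕ) [NeZero cap] (h2 : 2 ≤ cap) :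
    memTradeArena.WinningStrategy memTradeArena.V0
      (AvgRecharge memTradeW cap ((cap : ℝ) / 2)) (mtσ cap) ∧
    memTradeArena.FiniteStateOfSize cap (mtσ cap) := by
  constructor
  · constructor
    · intro h v hv
      have hv1 : v = 1 := hv
      exact Or.inr hv1
    · intro ρ hP hC
      have hshape := part1_shape cap h2 ρ hP hC
      have hEL := part1_ELcap cap h2 ρ (fun k => (hshape k).1)
      refine ⟨?_, ?_⟩
      · have ht := part1_tendsto cap h2 ρ hEL
        have ht' : Filter.Tendsto (fun m => ((avgELcap memTradeW cap ρ m : ℝ) : EReal))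
            Filter.atTop (nhds (((cap : ℝ) / 2 : ℝ) : EReal)) :=
          (EReal.tendsto_coe).mpr ht
        exact le_of_eq ht'.limsup_eq
      · intro m
        rw [hEL m]
        have hr : m % (cap + 1) < cap + 1 := Nat.mod_lt _ (by omega)
        have h3 : ((m % (cap + 1) : ℕ) : ℤ) ≤ (cap : ℤ) := by
          exact_mod_cast Nat.lt_succ_iff.mp hr
        omega
  · exact ⟨Fin cap, inferInstance, mtMem cap, Fintype.card_fin cap, mtNxt cap,
      fun h v => mtσ_concat cap h v⟩

private lemma part2_main (cap : ℕ) (h2 : 2 ≤ cap) (n : ℕ) (hn : n < cap)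
    (σ : List (Fin 2) → Fin 2)
    (hwin : memTradeArena.WinningStrategy memTradeArena.V0
      (AvgRecharge memTradeW cap ((cap : ℝ) / 2)) σ)
    (hfs : memTradeArena.FiniteStateOfSize n σ) : False := by
  classical
  obtain ⟨hstrat, hwinning⟩ := hwin
  obtain ⟨Mty, inst, mem, hcard, nxt, hnxt⟩ := hfs
  let F : Fin 2 × Mty → Fin 2 × Mty := fun p =>
    ((if p.1 = 0 then 1 else nxt p.1 p.2), mem.upd p.2 p.1 (if p.1 = 0 then 1 else nxt p.1 p.2))
  let s : ℕ → Fin 2 × Mty := fun k => F^[k] ((0 : Fin 2), mem.mI)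
  let ρ : ℕ → Fin 2 := fun k => (s k).1
  have hsstep : ∀ k, s (k + 1) = F (s k) := fun k => Function.iterate_succ_apply' F k _
  have hρ0 : ρ 0 = 0 := rfl
  have hFfst : ∀ p : Fin 2 × Mty, (F p).1 = if p.1 = 0 then 1 else nxt p.1 p.2 := fun p => rfl
  have hFsnd : ∀ p : Fin 2 × Mty, (F p).2 = mem.upd p.2 p.1 (F p).1 := fun p => rfl
  have hstep0 : ∀ k, ρ k = 0 → ρ (k + 1) = 1 := by
    intro k h
    show (s (k + 1)).1 = 1
    rw [hsstep k, hFfst, if_pos h]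
  have hstep1 : ∀ k, ρ k = 1 → ρ (k + 1) = nxt 1 (s k).2 := by
    intro k h
    show (s (k + 1)).1 = nxt 1 (s k).2
    have h' : (s k).1 = 1 := h
    rw [hsstep k, hFfst, if_neg (by rw [h']; decide), h']
  have hupd : ∀ k, (s (k + 1)).2 = mem.upd (s k).2 (ρ k) (ρ (k + 1)) := by
    intro k
    show (s (k + 1)).2 = mem.upd (s k).2 (s k).1 (s (k + 1)).1
    rw [hsstep k, hFsnd]
  -- ρ is a play
  have hPlay : memTradeArena.Play ρ := by
    refine ⟨hρ0, fun k => ?_⟩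
    rcases fin2cases (ρ k) with h | h
    · exact Or.inl ⟨h, hstep0 k h⟩
    · exact Or.inr h
  -- the memory states along ρ
  have hrunμ : ∀ k, mem.run (prefixList ρ k) = (s k).2 := by
    intro k
    induction k with
    | zero => simp [prefixList, Mem.run, Mem.runAux]; rfl
    | succ k ih => rw [run_prefixList_succ, ih, ← hupd k]
  -- ρ is consistent with σ
  have hCons : memTradeArena.ConsistentWith memTradeArena.V0 σ ρ := by
    intro k hk
    have hk1 : ρ k = 1 := hk
    rw [prefixList_as_concat ρ k, hnxt, ← prefixList_as_concat ρ k, hrunμ k, hk1]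
    exact hstep1 k hk1
  have hmem := hwinning ρ hPlay hCons
  have hA : Filter.limsup (fun m => ((avgELcap memTradeW cap ρ m : ℝ) : EReal))
      Filter.atTop ≤ (((cap : ℝ) / 2 : ℝ) : EReal) := hmem.1
  have hR : ∀ m, 0 ≤ ELcap memTradeW cap ρ m := hmem.2
  -- basic energy step facts
  let L : ℕ → ℤ := fun m => ELcap memTradeW cap ρ m
  have hL0 : L 0 = cap := rfl
  have hstepL : ∀ m, (¬(ρ m = 1 ∧ ρ (m + 1) = 0) ∧ L (m + 1) = L m - 1) ∨
      ((ρ m = 1 ∧ ρ (m + 1) = 0) ∧ L (m + 1) = cap) := by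
    intro m
    by_cases h : ρ m = 1 ∧ ρ (m + 1) = 0
    · refine Or.inr ⟨h, ?_⟩
      have hw : memTradeW (ρ m) (ρ (m + 1)) = none := by
        rw [memTradeW, if_pos h]
      show ELcap memTradeW cap ρ (m + 1) = cap
      rw [ELcap, hw]
    · refine Or.inl ⟨h, ?_⟩
      have hw : memTradeW (ρ m) (ρ (m + 1)) = some (-1) := by
        rw [memTradeW, if_neg h]
      show ELcap memTradeW cap ρ (m + 1) = ELcap memTradeW cap ρ m - 1
      rw [ELcap, hw]
      ring
  have hLle : ∀ m, L m ≤ cap := by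
    intro m
    induction m with
    | zero => rw [hL0]
    | succ m ih =>
      rcases hstepL m with ⟨_, h⟩ | ⟨_, h⟩ <;> rw [h] <;> omega
  have hLgeStep : ∀ m, L m - 1 ≤ L (m + 1) := by
    intro m
    have := hLle m
    rcases hstepL m with ⟨_, h⟩ | ⟨_, h⟩ <;> omega
  have hdown : ∀ a t, L a ≤ L (a + t) + t := by
    intro a t
    induction t with
    | zero => simp
    | succ t ih =>
      have := hLgeStep (a + t)
      have harw : a + (t + 1) = a + t + 1 := by omega
      rw [harw]
      push_cast
      omega
  have hvert : ∀ k, L k < cap → ρ k = 1 := by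
    intro k hk
    match k with
    | 0 => rw [hL0] at hk; omega
    | k + 1 =>
      rcases hstepL k with ⟨hne, _⟩ | ⟨_, h⟩
      · rcases fin2cases (ρ (k + 1)) with h0 | h1
        · exfalso
          apply hne
          refine ⟨?_, h0⟩
          rcases hPlay.2 k with ⟨_, h'⟩ | h'
          · rw [h'] at h0; exact absurd h0 (by decide)
          · exact h'
        · exact h1
      · rw [h] at hk; omega
  -- the loop argument: a repeated state inside a block of v₁'s is fatal
  have hloop : ∀ k1 p, 0 < p → s (k1 + p) = s k1 → (∀ j < p, ρ (k1 + j) = 1) → False := by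
    intro k1 p hp hper hone
    have hper' : ∀ t, s (k1 + t + p) = s (k1 + t) := by
      intro t
      induction t with
      | zero => simpa using hper
      | succ t ih =>
        have h1 : k1 + (t + 1) + p = (k1 + t + p) + 1 := by omega
        have h2 : k1 + (t + 1) = (k1 + t) + 1 := by omega
        rw [h1, h2, hsstep, ih, ← hsstep]
    have hmod : ∀ t, s (k1 + t) = s (k1 + t % p) := by
      intro t
      induction t using Nat.strong_induction_on with
      | _ t ih =>
        by_cases h : t < p
        · rw [Nat.mod_eq_of_lt h]
        · have h3 : k1 + t = k1 + (t - p) + p := by omega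
          have h4 : (t - p) % p = t % p := (Nat.mod_eq_sub_mod (by omega)).symm
          rw [h3, hper', ih _ (by omega), h4]
    have hall1 : ∀ t, ρ (k1 + t) = 1 := by
      intro t
      show (s (k1 + t)).1 = 1
      rw [hmod t]
      exact hone _ (Nat.mod_lt _ hp)
    have hdec : ∀ t, L (k1 + t) = L k1 - t := by
      intro t
      induction t with
      | zero => simp
      | succ t ih =>
        rcases hstepL (k1 + t) with ⟨_, h⟩ | ⟨⟨_, h0⟩, _⟩
        · have harw : k1 + (t + 1) = k1 + t + 1 := by omega
          rw [harw, h, ih]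
          push_cast
          ring
        · exfalso
          have := hall1 (t + 1)
          rw [show k1 + (t + 1) = k1 + t + 1 by omega] at this
          rw [this] at h0
          exact absurd h0 (by decide)
    have h1 : 0 ≤ L (k1 + ((L k1).toNat + 1)) := hR (k1 + ((L k1).toNat + 1))
    have h2 := hdec ((L k1).toNat + 1)
    have h3 : ((L k1).toNat : ℤ) = L k1 := Int.toNat_of_nonneg (hR k1)
    show False
    have : L (k1 + ((L k1).toNat + 1)) = L k1 - ((L k1).toNat + 1) := h2
    omega
  -- every block has length at most n
  have hDle : ∀ m, (cap : ℤ) - n ≤ L m := by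
    by_contra hc
    push_neg at hc
    obtain ⟨m, hm⟩ := hc
    have hLm : (cap : ℤ) - m ≤ L m := by
      have := hdown 0 m
      rw [hL0] at this
      simpa using this
    have hmn : n + 1 ≤ m := by
      have : (n : ℤ) < (m : ℤ) := by omega
      exact_mod_cast this
    have hones : ∀ j ≤ n, ρ (m - n + j) = 1 := by
      intro j hj
      apply hvert
      have h1 := hdown (m - n + j) (n - j)
      have harw : m - n + j + (n - j) = m := by omega
      rw [harw] at h1
      have hcast : ((n - j : ℕ) : ℤ) = (n : ℤ) - j := by
        push_cast [Nat.cast_sub hj]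
        ring
      rw [hcast] at h1
      omega
    have hph : Fintype.card Mty < Fintype.card (Fin (n + 1)) := by
      rw [hcard, Fintype.card_fin]
      omega
    obtain ⟨j1, j2, hne, heq⟩ :=
      Fintype.exists_ne_map_eq_of_card_lt (fun j : Fin (n + 1) => (s (m - n + j.val)).2) hph
    have key : ∀ j1 j2 : ℕ, j1 < j2 → j2 ≤ n →
        (s (m - n + j1)).2 = (s (m - n + j2)).2 → False := by
      intro j1 j2 hlt hle hseq
      refine hloop (m - n + j1) (j2 - j1) (by omega) ?_ ?_
      · have harw : m - n + j1 + (j2 - j1) = m - n + j2 := by omega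
        rw [harw]
        have e1 : (s (m - n + j2)).1 = 1 := hones j2 hle
        have e2 : (s (m - n + j1)).1 = 1 := hones j1 (by omega)
        exact Prod.ext_iff.mpr ⟨by rw [e1, e2], hseq.symm⟩
      · intro j hj
        have harw : m - n + j1 + j = m - n + (j1 + j) := by omega
        rw [harw]
        exact hones (j1 + j) (by omega)
    rcases hne.lt_or_gt with hlt | hlt
    · exact key j1.val j2.val hlt (by omega) heq
    · exact key j2.val j1.val hlt (by omega) heq.symm
  -- the potential-function bound on the sum of the block counters
  have hpot : ∀ m, 2 * (∑ i ∈ Finset.range m, ((cap : ℤ) - L i)) +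
      ((cap : ℤ) - L m) * ((n : ℤ) + 1 - ((cap : ℤ) - L m)) ≤ (m : ℤ) * n := by
    intro m
    induction m with
    | zero => simp [hL0]
    | succ m ih =>
      have hD0 : (0 : ℤ) ≤ (cap : ℤ) - L m := by have := hLle m; omega
      have hDn : (cap : ℤ) - L m ≤ n := by have := hDle m; omega
      rw [Finset.sum_range_succ]
      rcases hstepL m with ⟨_, h⟩ | ⟨_, h⟩
      · rw [h]
        push_cast
        nlinarith [ih]
      · rw [h]
        push_cast
        nlinarith [ih, mul_nonneg (by omega : (0 : ℤ) ≤ (n : ℤ) - ((cap : ℤ) - L m))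
          (by omega : (0 : ℤ) ≤ (cap : ℤ) - L m + 1)]
  -- lower bound on the averages
  have hbig : ∀ m : ℕ, 1 ≤ m → ((cap : ℝ) - (n : ℝ) / 2) ≤ avgELcap memTradeW cap ρ m := by
    intro m hm
    have hmR : (0 : ℝ) < (m : ℝ) := by exact_mod_cast hm
    have hSig : ∑ i ∈ Finset.range m, ((cap : ℤ) - L i) =
        (m : ℤ) * cap - ∑ i ∈ Finset.range m, L i := by
      rw [Finset.sum_sub_distrib, Finset.sum_const, Finset.card_range, nsmul_eq_mul]
    have hpos : (0 : ℤ) ≤ ((cap : ℤ) - L m) * ((n : ℤ) + 1 - ((cap : ℤ) - L m)) := by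
      have hD0 : (0 : ℤ) ≤ (cap : ℤ) - L m := by have := hLle m; omega
      have hDn : (cap : ℤ) - L m ≤ n := by have := hDle m; omega
      nlinarith
    have hZ : 2 * ((m : ℤ) * cap) - (m : ℤ) * n ≤ 2 * ∑ i ∈ Finset.range m, L i := by
      have := hpot m
      rw [hSig] at this
      omega
    have hcast : (∑ i ∈ Finset.range m, ((ELcap memTradeW cap ρ i : ℤ) : ℝ)) =
        ((∑ i ∈ Finset.range m, L i : ℤ) : ℝ) := by push_cast; rfl
    have hZR : 2 * ((m : ℝ) * cap) - (m : ℝ) * n ≤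
        2 * ((∑ i ∈ Finset.range m, L i : ℤ) : ℝ) := by exact_mod_cast hZ
    have havg : avgELcap memTradeW cap ρ m =
        ((∑ i ∈ Finset.range m, L i : ℤ) : ℝ) / (m : ℝ) := by
      unfold avgELcap
      rw [hcast]
    rw [havg, le_div_iff₀ hmR]
    nlinarith [hZR]
  -- contradiction with the limsup bound
  have hfreq : ((((cap : ℝ) - (n : ℝ) / 2) : ℝ) : EReal) ≤
      Filter.limsup (fun m => ((avgELcap memTradeW cap ρ m : ℝ) : EReal)) Filter.atTop :=
    Filter.le_limsup_of_frequently_le'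
      (Filter.Eventually.frequently (Filter.eventually_atTop.mpr
        ⟨1, fun m hm => EReal.coe_le_coe_iff.mpr (hbig m hm)⟩))
  have hle := le_trans hfreq hA
  rw [EReal.coe_le_coe_iff] at hle
  have hnR : (n : ℝ) < (cap : ℝ) := by exact_mod_cast hn
  linarith
/-- For even `cap ≥ 2` and `t = cap/2`, Player 0 has a winning
strategy of size `cap` for the average-bounded recharge game, but no winning
strategy of size `n` for any `n < cap`. -/
theorem memTrade_memory_requirement (cap : ℕ) (h2 : 2 ≤ cap) (he : Even cap) :
    (∃ σ : List (Fin 2) → Fin 2,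
      memTradeArena.WinningStrategy memTradeArena.V0
        (AvgRecharge memTradeW cap ((cap : ℝ) / 2)) σ ∧
      memTradeArena.FiniteStateOfSize cap σ) ∧
    ∀ n < cap, ¬ ∃ σ : List (Fin 2) → Fin 2,
      memTradeArena.WinningStrategy memTradeArena.V0
        (AvgRecharge memTradeW cap ((cap : ℝ) / 2)) σ ∧
      memTradeArena.FiniteStateOfSize n σ := by
  haveI : NeZero cap := ⟨by omega⟩
  refine ⟨⟨mtσ cap, (part1_main cap h2).1, (part1_main cap h2).2⟩, ?_⟩
  rintro n hn ⟨σ, hwin, hfs⟩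
  exact part2_main cap h2 n hn σ hwin hfs
end

section
/- Let (A, w, c) be a countdown game with arena A = (V, V0, V1, E, v_I). Let A' be the arena obtained from A by adding a fresh vertex v_I' to V1 with a single outgoing edge (v_I', v_I) labelled R, with v_I' as the new initial vertex, and let w' extend w by labelling this new edge R. Then: (1) for every play ρ of A, ρ ∈ CNTDWN(w, c) if, and only if, the play v_I' · ρ of A' lies in AvgRecharge(w', c, 0); and (2) Player 0 wins (A', AvgRecharge(w', c, 0)) if, and only if, Player 0 wins (A, CNTDWN(w, c)). -/
/-- A countdown game: arena, weight function and sink vertex subject to the usual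
syntactic restrictions. -/
structure CountdownGame (V : Type) where
  A : Arena V
  w : V → V → ℤ
  sink : V
  hvI : A.vI ∈ A.V0
  hsinkP1 : sink ∉ A.V0
  hsinkLoop : ∀ v, A.E sink v ↔ v = sink
  hToSink : ∀ v ∈ A.V0, A.E v sink
  hEdgeShape : ∀ u v, A.E u v →
    (u = sink ∧ v = sink) ∨ (u ∈ A.V0 ∧ v = sink) ∨
      (u ∈ A.V0 ∧ v ∉ A.V0 ∧ v ≠ sink) ∨ (u ∉ A.V0 ∧ u ≠ sink ∧ v ∈ A.V0)
  hNeg : ∀ u v, A.E u v → u ∈ A.V0 → v ∉ A.V0 → v ≠ sink → w u v < 0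
  hDistinct : ∀ u ∈ A.V0, ∀ v v', A.E u v → A.E u v' → v ≠ v' → w u v ≠ w u v'
  hZero : ∀ u v, A.E u v → ¬(u ∈ A.V0 ∧ v ∉ A.V0 ∧ v ≠ sink) → w u v = 0

/-- The countdown objective: reach the sink with `c + EL = 0`. -/
def CNTDWN {V : Type} (w : V → V → ℤ) (sink : V) (c : ℕ) : Set (ℕ → V) :=
  {ρ | ∃ n, ρ n = sink ∧ (c : ℤ) + EL w ρ n = 0}

/-- The arena `A'` obtained by adding a fresh initial vertex (`none`), belonging to
Player 1, with a single edge to the old initial vertex. -/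
def cdArena {V : Type} (C : CountdownGame V) : Arena (Option V) where
  V0 := {p | ∃ v ∈ C.A.V0, p = some v}
  E := fun p q =>
    match p, q with
    | none, some v => v = C.A.vI
    | some u, some v => C.A.E u v
    | _, _ => False
  vI := none
  succ := by
    intro p
    match p with
    | none => exact ⟨some C.A.vI, rfl⟩
    | some u =>
      obtain ⟨v, hv⟩ := C.A.succ u
      exact ⟨some v, hv⟩

/-- The recharge weight function `w'` extending `w`: the new edge is labelled `R`. -/
def cdWeight {V : Type} (C : CountdownGame V) : Option V → Option V → Option ℤ :=
  fun p q =>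
    match p, q with
    | none, some _ => none
    | some u, some v => some (C.w u v)
    | _, _ => some 0

/-- The play `v_I' · ρ` of `A'` obtained by prepending the fresh initial vertex. -/
def cdPlay {V : Type} (ρ : ℕ → V) : ℕ → Option V :=
  fun n => match n with
  | 0 => none
  | k + 1 => some (ρ k)


section CountdownAux

open Filter

variable {V : Type}

lemma edge_w_nonpos (C : CountdownGame V) {u v : V} (h : C.A.E u v) : C.w u v ≤ 0 := by
  by_cases hc : u ∈ C.A.V0 ∧ v ∉ C.A.V0 ∧ v ≠ C.sink
  · exact le_of_lt (C.hNeg u v h hc.1 hc.2.1 hc.2.2)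
  · exact le_of_eq (C.hZero u v h hc)

lemma EL_succ (w : V → V → ℤ) (ρ : ℕ → V) (n : ℕ) :
    EL w ρ (n + 1) = EL w ρ n + w (ρ n) (ρ (n + 1)) := Finset.sum_range_succ _ _

lemma EL_antitone (C : CountdownGame V) {ρ : ℕ → V} (hρ : C.A.Play ρ) :
    Antitone (EL C.w ρ) := by
  apply antitone_nat_of_succ_le
  intro n
  rw [EL_succ]
  have := edge_w_nonpos C (hρ.2 n)
  linarith

lemma sink_after (C : CountdownGame V) {ρ : ℕ → V} (hρ : C.A.Play ρ) {n : ℕ}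
    (hn : ρ n = C.sink) : ∀ m, n ≤ m → ρ m = C.sink := by
  intro m hm
  induction m, hm using Nat.le_induction with
  | base => exact hn
  | succ m hm ih =>
    have h := hρ.2 m
    rw [ih] at h
    exact (C.hsinkLoop _).mp h

lemma w_sink (C : CountdownGame V) : C.w C.sink C.sink = 0 := by
  refine C.hZero _ _ ((C.hsinkLoop _).mpr rfl) ?_
  rintro ⟨h, -⟩
  exact C.hsinkP1 h

lemma EL_const_after_sink (C : CountdownGame V) {ρ : ℕ → V} (hρ : C.A.Play ρ) {n : ℕ}
    (hn : ρ n = C.sink) : ∀ m, n ≤ m → EL C.w ρ m = EL C.w ρ n := by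
  intro m hm
  induction m, hm using Nat.le_induction with
  | base => rfl
  | succ m hm ih =>
    rw [EL_succ, ih, sink_after C hρ hn m hm, sink_after C hρ hn (m + 1) (by omega),
      w_sink, add_zero]

lemma ELcap_cdPlay (C : CountdownGame V) (c : ℕ) (ρ : ℕ → V) (n : ℕ) :
    ELcap (cdWeight C) c (cdPlay ρ) (n + 1) = (c : ℤ) + EL C.w ρ n := by
  induction n with
  | zero => simp [ELcap, cdWeight, cdPlay, EL]
  | succ n ih =>
    have h : ELcap (cdWeight C) c (cdPlay ρ) (n + 2) =
        ELcap (cdWeight C) c (cdPlay ρ) (n + 1) + C.w (ρ n) (ρ (n + 1)) := by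
      show (match cdWeight C (cdPlay ρ (n + 1)) (cdPlay ρ (n + 2)) with
        | none => ((c : ℤ))
        | some k => ELcap (cdWeight C) c (cdPlay ρ) (n + 1) + k) = _
      rfl
    rw [h, ih, EL_succ]
    ring

lemma antitone_int_eventually_const (f : ℕ → ℤ) (hf : Antitone f) (b : ℤ)
    (hb : ∀ n, b ≤ f n) : ∃ N, ∀ m, N ≤ m → f m = f N := by
  obtain ⟨lb, ⟨N, hN⟩, hleast⟩ := Int.exists_least_of_bdd (P := fun z => ∃ n, f n = z)
    ⟨b, by rintro z ⟨n, rfl⟩; exact hb n⟩ ⟨f 0, 0, rfl⟩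
  refine ⟨N, fun m hm => le_antisymm (hf hm) ?_⟩
  rw [hN]
  exact hleast (f m) ⟨m, rfl⟩

lemma avg_tendsto (g : ℕ → ℝ) (N : ℕ) (a : ℝ) (h : ∀ m, N ≤ m → g m = a) :
    Tendsto (fun M : ℕ => (∑ i ∈ Finset.range M, g i) / (M : ℝ)) atTop (nhds a) := by
  have key : ∀ M : ℕ, N ≤ M → (∑ i ∈ Finset.range M, g i) =
      (∑ i ∈ Finset.range N, g i) + ((M : ℝ) - N) * a := by
    intro M hM
    rw [← Finset.sum_range_add_sum_Ico g hM]
    congr 1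
    rw [Finset.sum_congr rfl (fun i hi => h i (Finset.mem_Ico.mp hi).1),
      Finset.sum_const, Nat.card_Ico, nsmul_eq_mul, Nat.cast_sub hM]
  have lim : Tendsto (fun M : ℕ =>
      ((∑ i ∈ Finset.range N, g i) - N * a) / M + a) atTop (nhds a) := by
    have := (tendsto_const_div_atTop_nhds_zero_nat
      ((∑ i ∈ Finset.range N, g i) - N * a)).add (tendsto_const_nhds (x := a))
    simpa using this
  apply lim.congr'
  filter_upwards [eventually_ge_atTop (max N 1)] with M hM
  have hMN : N ≤ M := le_trans (le_max_left _ _) hM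
  have hM1 : (1 : ℕ) ≤ M := le_trans (le_max_right _ _) hM
  have hMne : (M : ℝ) ≠ 0 := by
    have : (0 : ℝ) < M := by exact_mod_cast hM1
    linarith
  rw [key M hMN]
  field_simp
  ring

lemma cdPart1 (C : CountdownGame V) (c : ℕ) (ρ : ℕ → V) (hρ : C.A.Play ρ) :
    ρ ∈ CNTDWN C.w C.sink c ↔ cdPlay ρ ∈ AvgRecharge (cdWeight C) c (0 : ℝ) := by
  constructor
  · rintro ⟨n, hsink, hEL⟩
    have hzero : ∀ m, n + 1 ≤ m → ((ELcap (cdWeight C) c (cdPlay ρ) m : ℤ) : ℝ) = 0 := by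
      intro m hm
      obtain ⟨k, rfl⟩ : ∃ k, m = k + 1 := ⟨m - 1, by omega⟩
      rw [ELcap_cdPlay, EL_const_after_sink C hρ hsink k (by omega)]
      push_cast
      exact_mod_cast hEL
    refine ⟨?_, ?_⟩
    · have htend := avg_tendsto (fun i => ((ELcap (cdWeight C) c (cdPlay ρ) i : ℤ) : ℝ))
        (n + 1) 0 hzero
      have htend' : Tendsto (fun M : ℕ => ((avgELcap (cdWeight C) c (cdPlay ρ) M : ℝ) : EReal))
          atTop (nhds (((0 : ℝ)) : EReal)) :=
        (continuous_coe_real_ereal.tendsto _).comp htend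
      exact le_of_eq htend'.limsup_eq
    · intro m
      match m with
      | 0 => exact Int.natCast_nonneg c
      | k + 1 =>
        rw [ELcap_cdPlay]
        rcases le_or_gt k n with hk | hk
        · have := EL_antitone C hρ hk
          linarith
        · rw [EL_const_after_sink C hρ hsink k (le_of_lt hk)]
          linarith
  · rintro ⟨havg, hrec⟩
    have hlb : ∀ k, -(c : ℤ) ≤ EL C.w ρ k := by
      intro k
      have := hrec (k + 1)
      rw [ELcap_cdPlay] at this
      linarith
    obtain ⟨N, hN⟩ := antitone_int_eventually_const (EL C.w ρ) (EL_antitone C hρ)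
      (-(c : ℤ)) hlb
    have hconst : ∀ m, N + 1 ≤ m →
        ((ELcap (cdWeight C) c (cdPlay ρ) m : ℤ) : ℝ) = (c : ℝ) + (EL C.w ρ N : ℝ) := by
      intro m hm
      obtain ⟨k, rfl⟩ : ∃ k, m = k + 1 := ⟨m - 1, by omega⟩
      rw [ELcap_cdPlay, hN k (by omega)]
      push_cast
      ring
    have htend := avg_tendsto (fun i => ((ELcap (cdWeight C) c (cdPlay ρ) i : ℤ) : ℝ))
      (N + 1) ((c : ℝ) + (EL C.w ρ N : ℝ)) hconst
    have htend' : Tendsto (fun M : ℕ => ((avgELcap (cdWeight C) c (cdPlay ρ) M : ℝ) : EReal))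
        atTop (nhds ((((c : ℝ) + (EL C.w ρ N : ℝ))) : EReal)) :=
      (continuous_coe_real_ereal.tendsto _).comp htend
    have havg' : Filter.limsup (fun n => ((avgELcap (cdWeight C) c (cdPlay ρ) n : ℝ) : EReal))
        Filter.atTop ≤ (((0 : ℝ)) : EReal) := havg
    rw [htend'.limsup_eq] at havg'
    have hle : (c : ℝ) + (EL C.w ρ N : ℝ) ≤ 0 := EReal.coe_le_coe_iff.mp havg'
    have hge : (0 : ℤ) ≤ (c : ℤ) + EL C.w ρ N := by
      have := hrec (N + 1)
      rwa [ELcap_cdPlay] at this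
    have hL : (c : ℤ) + EL C.w ρ N = 0 := by
      have h2 : (c : ℤ) + EL C.w ρ N ≤ 0 := by exact_mod_cast hle
      omega
    have hw0 : ∀ m, N ≤ m → C.w (ρ m) (ρ (m + 1)) = 0 := by
      intro m hm
      have h1 := EL_succ C.w ρ m
      rw [hN m hm, hN (m + 1) (by omega)] at h1
      linarith
    have hsink : ∃ m, N ≤ m ∧ ρ m = C.sink := by
      by_contra hcon
      push_neg at hcon
      have hstep : ∀ m, N ≤ m → ρ m ∉ C.A.V0 ∧ ρ (m + 1) ∈ C.A.V0 := by
        intro m hm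
        rcases C.hEdgeShape _ _ (hρ.2 m) with ⟨h1, -⟩ | ⟨-, h2⟩ | ⟨hu, hv, h3⟩ | ⟨h1, -, h4⟩
        · exact absurd h1 (hcon m hm)
        · exact absurd h2 (hcon (m + 1) (by omega))
        · exact absurd (hw0 m hm) (ne_of_lt (C.hNeg _ _ (hρ.2 m) hu hv h3))
        · exact ⟨h1, h4⟩
      exact (hstep (N + 1) (by omega)).1 (hstep N le_rfl).2
    obtain ⟨m, hm, hms⟩ := hsink
    refine ⟨m, hms, ?_⟩
    rw [hN m hm]
    exact hL

lemma prefixList_succ (ρ : ℕ → V) (n : ℕ) :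
    prefixList ρ (n + 1) = prefixList ρ n ++ [ρ (n + 1)] := by
  simp [prefixList, List.range_succ]

lemma prefixList_cdPlay (ρ : ℕ → V) (n : ℕ) :
    prefixList (cdPlay ρ) (n + 1) = none :: (prefixList ρ n).map some := by
  induction n with
  | zero => simp [prefixList, cdPlay, List.range_succ]
  | succ n ih =>
    rw [prefixList_succ, ih, prefixList_succ]
    simp [cdPlay]

lemma strip_none_cons (l : List V) : (none :: l.map some).filterMap id = l := by
  simp [List.filterMap_cons]

end CountdownAux

/-- (1) A play `ρ` of the countdown game is in `CNTDWN(w,c)` iff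
`v_I' · ρ ∈ AvgRecharge(w',c,0)`; (2) Player 0 wins `(A', AvgRecharge(w',c,0))` iff
Player 0 wins `(A, CNTDWN(w,c))`. -/
theorem countdown_to_avgRecharge {V : Type} [Fintype V] (C : CountdownGame V) (c : ℕ) :
    (∀ ρ : ℕ → V, C.A.Play ρ →
      (ρ ∈ CNTDWN C.w C.sink c ↔ cdPlay ρ ∈ AvgRecharge (cdWeight C) c (0 : ℝ))) ∧
    ((cdArena C).Player0Wins (AvgRecharge (cdWeight C) c (0 : ℝ)) ↔
      C.A.Player0Wins (CNTDWN C.w C.sink c)) := by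
  refine ⟨fun ρ hρ => cdPart1 C c ρ hρ, ?_, ?_⟩
  · -- A' wins ⇒ A wins
    rintro ⟨σ', hstrat', hwin'⟩
    refine ⟨fun l => (σ' (none :: l.map some)).getD C.A.vI, ?_, ?_⟩
    · intro h v hv
      have hE := hstrat' (none :: h.map some) (some v) ⟨v, hv, rfl⟩
      have heq : (none :: h.map some) ++ [some v] = none :: (h ++ [v]).map some := by simp
      rw [heq] at hE
      cases hs : σ' (none :: (h ++ [v]).map some) with
      | none => rw [hs] at hE; exact absurd hE (by simp [cdArena])
      | some u =>
        rw [hs] at hE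
        show C.A.E v ((σ' (none :: List.map some (h ++ [v]))).getD C.A.vI)
        rw [hs]
        exact hE
    · intro ρ hplay hcons
      have hplay' : (cdArena C).Play (cdPlay ρ) := by
        refine ⟨rfl, ?_⟩
        intro n
        match n with
        | 0 => exact hplay.1
        | k + 1 => exact hplay.2 k
      have hcons' : (cdArena C).ConsistentWith (cdArena C).V0 σ' (cdPlay ρ) := by
        intro n hn
        match n with
        | 0 =>
          obtain ⟨v, -, hv⟩ := hn
          exact absurd hv (by simp [cdPlay])
        | k + 1 =>
          obtain ⟨v, hv0, hv⟩ := hn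
          have hvk : v = ρ k := by
            have : some (ρ k) = some v := hv
            exact (Option.some_injective V this).symm
          subst hvk
          have hE := hstrat' (prefixList (cdPlay ρ) k) (some (ρ k)) ⟨ρ k, hv0, rfl⟩
          have hpre : prefixList (cdPlay ρ) k ++ [some (ρ k)] = prefixList (cdPlay ρ) (k + 1) := by
            rw [prefixList_succ]
            rfl
          rw [hpre] at hE
          have hck : ρ (k + 1) = (σ' (none :: (prefixList ρ k).map some)).getD C.A.vI :=
            hcons k hv0
          cases hs : σ' (prefixList (cdPlay ρ) (k + 1)) with
          | none => rw [hs] at hE; exact absurd hE (by simp [cdArena])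
          | some u =>
            have hmm : ρ (k + 1) = u := by
              rw [← prefixList_cdPlay ρ k, hs] at hck
              exact hck
            show some (ρ (k + 1)) = some u
            rw [hmm]
      have := hwin' (cdPlay ρ) hplay' hcons'
      exact (cdPart1 C c ρ hplay).mpr this
  · -- A wins ⇒ A' wins
    rintro ⟨σ, hstrat, hwin⟩
    refine ⟨fun l => some (σ (l.filterMap id)), ?_, ?_⟩
    · intro h v hv
      obtain ⟨u, hu, rfl⟩ := hv
      have heq : (h ++ [some u]).filterMap id = h.filterMap id ++ [u] := by simp
      show (cdArena C).E (some u) (some (σ ((h ++ [some u]).filterMap id)))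
      rw [heq]
      exact hstrat (h.filterMap id) u hu
    · intro ρ' hplay' hcons'
      have hsome : ∀ n, ∃ v, ρ' (n + 1) = some v := by
        intro n
        induction n with
        | zero =>
          have h0 := hplay'.2 0
          rw [hplay'.1] at h0
          cases h : ρ' 1 with
          | none => rw [h] at h0; exact absurd h0 (by simp [cdArena])
          | some v => exact ⟨v, rfl⟩
        | succ n ih =>
          obtain ⟨v, hv⟩ := ih
          have h0 := hplay'.2 (n + 1)
          rw [hv] at h0
          cases h : ρ' (n + 2) with
          | none => rw [h] at h0; exact absurd h0 (by simp [cdArena])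
          | some u => exact ⟨u, rfl⟩
      set ρ : ℕ → V := fun n => (ρ' (n + 1)).getD C.A.vI with hρdef
      have hρ' : ∀ n, ρ' (n + 1) = some (ρ n) := by
        intro n
        obtain ⟨v, hv⟩ := hsome n
        rw [hρdef]
        simp only [hv, Option.getD_some]
      have hρcd : ρ' = cdPlay ρ := by
        funext n
        match n with
        | 0 => exact hplay'.1
        | k + 1 => exact hρ' k
      have hplay : C.A.Play ρ := by
        constructor
        · have h0 := hplay'.2 0
          rw [hplay'.1, hρ' 0] at h0
          exact h0
        · intro n
          have h0 := hplay'.2 (n + 1)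
          rw [hρ' n, hρ' (n + 1)] at h0
          exact h0
      have hcons : C.A.ConsistentWith C.A.V0 (fun l => σ l) ρ := by
        intro n hn
        have hmem : ρ' (n + 1) ∈ (cdArena C).V0 := by
          rw [hρ' n]
          exact ⟨ρ n, hn, rfl⟩
        have hc : some (ρ (n + 1)) =
            some (σ ((prefixList (cdPlay ρ) (n + 1)).filterMap id)) := by
          rw [← hρ' (n + 1), ← hρcd]
          exact hcons' (n + 1) hmem
        rw [prefixList_cdPlay ρ n, strip_none_cons] at hc
        exact Option.some_injective V hc
      have hwinρ := hwin ρ hplay hcons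
      rw [hρcd]
      exact (cdPart1 C c ρ hplay).mp hwinρ
end

section
/- Let A be an arena with n vertices and recharge weight function w whose weights lie in {−W, …, 0} ∪ {R}. Every finite path v_0 v_1 ⋯ v_m in A that traverses no R-labelled edge and satisfies EL(v_0⋯v_m) < −(n−1)·W contains positions j < j' such that v_j = v_{j'} and EL(v_j ⋯ v_{j'}) < 0, i.e., it contains a cycle of strictly negative weight without R-edges. -/
lemma key_neg_cycle {V : Type} [Fintype V] (W : ℕ) :
    ∀ m : ℕ, ∀ (ρ : ℕ → V) (f : ℕ → ℤ),
    (∀ i < m, -(W : ℤ) ≤ f i ∧ f i ≤ 0) →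
    (∀ j j', j < j' → j' ≤ m → ρ j = ρ j' → 0 ≤ ∑ i ∈ Finset.Ico j j', f i) →
    -(((Fintype.card V - 1) * W : ℕ) : ℤ) ≤ ∑ i ∈ Finset.range m, f i := by
  intro m
  induction m using Nat.strong_induction_on with
  | _ m IH =>
    intro ρ f hb H
    by_cases hrep : ∃ j j', j < j' ∧ j' ≤ m ∧ ρ j = ρ j'
    · obtain ⟨j, j', hjj, hj'm, heq⟩ := hrep
      have hcyc0 : ∑ i ∈ Finset.Ico j j', f i = 0 := by
        have h1 := H j j' hjj hj'm heq
        have h2 : ∑ i ∈ Finset.Ico j j', f i ≤ 0 :=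
          Finset.sum_nonpos (fun i hi =>
            (hb i (lt_of_lt_of_le (Finset.mem_Ico.mp hi).2 hj'm)).2)
        omega
      set d := j' - j with hd
      have hdpos : 0 < d := by omega
      have hdm : d ≤ m := by omega
      set m' := m - d with hm'
      have hm'd : m' + d = m := by omega
      have hjm' : j ≤ m' := by omega
      set ρ' : ℕ → V := fun i => if i < j then ρ i else ρ (i + d) with hρ'
      set f' : ℕ → ℤ := fun i => if i < j then f i else f (i + d) with hf'
      -- sums of f' over intervals
      have hsumlow : ∀ a b, b ≤ j → ∑ i ∈ Finset.Ico a b, f' i = ∑ i ∈ Finset.Ico a b, f i := by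
        intro a b hbj
        apply Finset.sum_congr rfl
        intro i hi
        have : i < j := lt_of_lt_of_le (Finset.mem_Ico.mp hi).2 hbj
        simp [hf', this]
      have hsumhigh : ∀ a b, j ≤ a →
          ∑ i ∈ Finset.Ico a b, f' i = ∑ i ∈ Finset.Ico (a + d) (b + d), f i := by
        intro a b haj
        rw [← Finset.sum_Ico_add' f a b d]
        apply Finset.sum_congr rfl
        intro i hi
        have : ¬ i < j := by
          have := (Finset.mem_Ico.mp hi).1; omega
        simp [hf', this]
      have hb' : ∀ i < m', -(W : ℤ) ≤ f' i ∧ f' i ≤ 0 := by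
        intro i hi
        by_cases hij : i < j
        · simpa [hf', hij] using hb i (by omega)
        · simpa [hf', hij] using hb (i + d) (by omega)
      have hρh : ∀ i, j ≤ i → ρ' i = ρ (i + d) := by
        intro i hi
        simp [hρ', not_lt.mpr hi]
      have hρl : ∀ i, i ≤ j → ρ' i = ρ i := by
        intro i hi
        by_cases h : i < j
        · simp [hρ', h]
        · have hni : i = j := by omega
          rw [hρh i (by omega), show i + d = j' by omega, ← heq, hni]
      have H' : ∀ j0 j0', j0 < j0' → j0' ≤ m' → ρ' j0 = ρ' j0' →
          0 ≤ ∑ i ∈ Finset.Ico j0 j0', f' i := by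
        intro j0 j0' h01 h0m heq'
        by_cases hc1 : j0' ≤ j
        · rw [hsumlow j0 j0' hc1]
          rw [hρl j0 (by omega), hρl j0' hc1] at heq'
          exact H j0 j0' h01 (by omega) heq'
        · by_cases hc2 : j ≤ j0
          · rw [hsumhigh j0 j0' hc2]
            rw [hρh j0 hc2, hρh j0' (by omega)] at heq'
            exact H (j0 + d) (j0' + d) (by omega) (by omega) heq'
          · push_neg at hc1 hc2
            have hsplit : ∑ i ∈ Finset.Ico j0 j0', f' i =
                ∑ i ∈ Finset.Ico j0 j, f' i + ∑ i ∈ Finset.Ico j j0', f' i := by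
              rw [Finset.sum_Ico_consecutive _ (le_of_lt hc2) (le_of_lt hc1)]
            rw [hsplit, hsumlow j0 j le_rfl, hsumhigh j j0' le_rfl,
              show j + d = j' by omega]
            have htot : ∑ i ∈ Finset.Ico j0 (j0' + d), f i =
                ∑ i ∈ Finset.Ico j0 j, f i + ∑ i ∈ Finset.Ico j j', f i +
                ∑ i ∈ Finset.Ico j' (j0' + d), f i := by
              rw [← Finset.sum_Ico_consecutive f (show j0 ≤ j by omega)
                  (show j ≤ j0' + d by omega),
                ← Finset.sum_Ico_consecutive f (show j ≤ j' by omega)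
                  (show j' ≤ j0' + d by omega)]
              ring
            rw [hρl j0 (by omega), hρh j0' (by omega)] at heq'
            have hH := H j0 (j0' + d) (by omega) (by omega) heq'
            omega
      have hIH := IH m' (by omega) ρ' f' hb' H'
      have hsum_eq : ∑ i ∈ Finset.range m', f' i = ∑ i ∈ Finset.range m, f i := by
        rw [Finset.range_eq_Ico, Finset.range_eq_Ico,
          ← Finset.sum_Ico_consecutive f' (Nat.zero_le j) hjm',
          ← Finset.sum_Ico_consecutive f (Nat.zero_le j) (show j ≤ m by omega),
          hsumlow 0 j le_rfl, hsumhigh j m' le_rfl,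
          show j + d = j' by omega, hm'd]
        have h2 : ∑ i ∈ Finset.Ico j m, f i =
            ∑ i ∈ Finset.Ico j j', f i + ∑ i ∈ Finset.Ico j' m, f i :=
          (Finset.sum_Ico_consecutive f (le_of_lt hjj) hj'm).symm
        omega
      omega
    · -- no repetition: path is injective on {0..m}, so m ≤ card V - 1
      push_neg at hrep
      have hinj : Function.Injective (fun k : Fin (m + 1) => ρ k) := by
        intro a b hab
        by_contra hne
        rcases Nat.lt_or_ge (a : ℕ) (b : ℕ) with h | h
        · exact hrep a b h (by omega) hab
        · have h' : (b : ℕ) < a := by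
            rcases Nat.lt_or_ge (b : ℕ) (a : ℕ) with h2 | h2
            · exact h2
            · exfalso; exact hne (Fin.ext (by omega))
          exact hrep b a h' (by omega) hab.symm
      have hcard : m + 1 ≤ Fintype.card V := by
        simpa using Fintype.card_le_of_injective _ hinj
      have hlb : -((m : ℤ) * W) ≤ ∑ i ∈ Finset.range m, f i := by
        calc -((m : ℤ) * W) = ∑ _i ∈ Finset.range m, -(W : ℤ) := by
              simp [Finset.sum_const, mul_comm]
          _ ≤ ∑ i ∈ Finset.range m, f i :=
              Finset.sum_le_sum (fun i hi => (hb i (Finset.mem_range.mp hi)).1)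
      have hm : (m : ℤ) ≤ ((Fintype.card V - 1 : ℕ) : ℤ) := by
        have : m ≤ Fintype.card V - 1 := by omega
        exact_mod_cast this
      have : -(((Fintype.card V - 1) * W : ℕ) : ℤ) ≤ -((m : ℤ) * W) := by
        push_cast
        nlinarith [Int.ofNat_nonneg W]
      omega

/-- In an arena with `n` vertices and weights in `{-W,…,0} ∪ {R}`,
every finite path without `R`-edges whose energy level is below `-(n-1)·W` contains a
cycle of strictly negative weight. -/
theorem negative_cycle_of_low_energy {V : Type} [Fintype V] (A : Arena V)
    (w : V → V → Option ℤ) (W : ℕ)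
    (hw : ∀ u v, A.E u v → ∀ k : ℤ, w u v = some k → -(W : ℤ) ≤ k ∧ k ≤ 0)
    (ρ : ℕ → V) (m : ℕ)
    (hpath : ∀ i < m, A.E (ρ i) (ρ (i + 1)))
    (hnoR : ∀ i < m, w (ρ i) (ρ (i + 1)) ≠ none)
    (hEL : (∑ i ∈ Finset.range m, (w (ρ i) (ρ (i + 1))).getD 0) <
      -(((Fintype.card V - 1) * W : ℕ) : ℤ)) :
    ∃ j j', j < j' ∧ j' ≤ m ∧ ρ j = ρ j' ∧
      (∑ i ∈ Finset.Ico j j', (w (ρ i) (ρ (i + 1))).getD 0) < 0 := by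
  by_contra hcon
  push_neg at hcon
  have hb : ∀ i < m, -(W : ℤ) ≤ (w (ρ i) (ρ (i + 1))).getD 0 ∧
      (w (ρ i) (ρ (i + 1))).getD 0 ≤ 0 := by
    intro i hi
    cases hwi : w (ρ i) (ρ (i + 1)) with
    | none => exact absurd hwi (hnoR i hi)
    | some k =>
      have := hw _ _ (hpath i hi) k hwi
      simpa using this
  have h := key_neg_cycle W m ρ (fun i => (w (ρ i) (ρ (i + 1))).getD 0) hb
    (fun j j' h1 h2 h3 => hcon j j' h1 h2 h3)
  omega
end

section
/- Let A be an arena with recharge weight function w such that every vertex is of exactly one of three types: a recharge-vertex (all incoming edges labelled R), a zero-vertex (all incoming edges have weight 0), or a decrement-vertex (all incoming edges have strictly negative weight). Let Ω color recharge-vertices 2, decrement-vertices 1, and zero-vertices 0, let W be the largest absolute weight, and let cap = (|V|−1)·W. If σ is a positional winning strategy for Player 0 in the parity game (A, Parity(Ω)), then σ is a winning strategy for Player 0 in the recharge game (A, Recharge(w, cap)). -/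
/-- Every vertex is of exactly one of three types, and `Ω` colors recharge-vertices
`2`, decrement-vertices `1` and zero-vertices `0`. -/
def ColoredRecharge {V : Type} (A : Arena V) (w : V → V → Option ℤ) (Ω : V → ℕ) : Prop :=
  ∀ v : V,
    (Ω v = 2 ∧ ∀ u, A.E u v → w u v = none) ∨
    (Ω v = 1 ∧ ∀ u, A.E u v → ∃ k : ℤ, w u v = some k ∧ k < 0) ∨
    (Ω v = 0 ∧ ∀ u, A.E u v → w u v = some 0)


private lemma prefixList_eq_append {V : Type} (ρ : ℕ → V) (n : ℕ) :
    prefixList ρ n = (List.range n).map ρ ++ [ρ n] := by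
  simp [prefixList, List.range_succ]

private lemma consistent_simp {V : Type} (A : Arena V) (p : Set V) (σ : List V → V)
    (hpos : Positional σ) (ρ : ℕ → V) (hcons : A.ConsistentWith p σ ρ) :
    ∀ n, ρ n ∈ p → ρ (n + 1) = σ [ρ n] := by
  intro n hn
  have h := hcons n hn
  rwa [prefixList_eq_append, hpos] at h

/-- The pumping lemma: a play consistent with a positional winning strategy for the
parity objective cannot contain a cycle with a color-1 vertex and no color-2 vertex. -/
private lemma pump {V : Type} (A : Arena V) (Ω : V → ℕ) (σ : List V → V)
    (hpos : Positional σ) (hwin : A.WinningStrategy A.V0 (ParityObj Ω) σ)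
    (hcol : ∀ v, Ω v ≤ 2)
    (ρ : ℕ → V) (hplay : A.Play ρ) (hcons : A.ConsistentWith A.V0 σ ρ)
    (i j : ℕ) (hij : i < j) (heq : ρ i = ρ j)
    (h2 : ∀ m, i < m → m ≤ j → Ω (ρ m) ≠ 2)
    (h1 : ∃ m, i < m ∧ m ≤ j ∧ Ω (ρ m) = 1) : False := by
  set p := j - i with hp
  have hp0 : 0 < p := Nat.sub_pos_of_lt hij
  have hip : i + p = j := by omega
  set ρ' : ℕ → V := fun n => if n < i then ρ n else ρ (i + (n - i) % p) with hρ'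
  -- the looped continuation
  have hloop : ∀ q : ℕ, q < p → ρ (i + (q + 1) % p) = ρ (i + q + 1) := by
    intro q hq
    rcases eq_or_lt_of_le (Nat.succ_le_of_lt hq) with h | h
    · have h' : (q + 1) % p = 0 := by
        have hqq : q + 1 = p := h
        rw [hqq, Nat.mod_self]
      rw [h', show i + 0 = i from rfl, show i + q + 1 = j by omega]
      exact heq
    · rw [Nat.mod_eq_of_lt h]
      exact congrArg ρ (by omega)
  have hstep : ∀ n, ∃ m, ρ' n = ρ m ∧ ρ' (n + 1) = ρ (m + 1) := by
    intro n
    by_cases hn : n + 1 < i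
    · exact ⟨n, by simp [hρ', show n < i by omega], by simp [hρ', hn]⟩
    by_cases hn' : n < i
    · -- n + 1 = i
      have hni : n + 1 = i := by omega
      refine ⟨n, by simp [hρ', hn'], ?_⟩
      simp only [hρ', if_neg (show ¬ n + 1 < i by omega)]
      rw [show n + 1 - i = 0 by omega, Nat.zero_mod]
      exact congrArg ρ (by omega)
    · -- n ≥ i
      set q := (n - i) % p with hq
      have hqp : q < p := Nat.mod_lt _ hp0
      refine ⟨i + q, by simp [hρ', hn', hq], ?_⟩
      simp only [hρ', if_neg (by omega : ¬ n + 1 < i)]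
      have harith : (n + 1 - i) % p = (q + 1) % p := by
        have h1 : n + 1 - i = (n - i) + 1 := by omega
        rw [h1, Nat.add_mod, Nat.add_mod q 1 p, Nat.mod_eq_of_lt hqp]
      rw [harith]
      exact hloop q hqp
  have hplay' : A.Play ρ' := by
    constructor
    · by_cases h0 : 0 < i
      · simpa [hρ', h0] using hplay.1
      · have : i = 0 := by omega
        simp [hρ', this]
        simpa [this] using hplay.1
    · intro n
      obtain ⟨m, h1', h2'⟩ := hstep n
      rw [h1', h2']
      exact hplay.2 m
  have hcons' : A.ConsistentWith A.V0 σ ρ' := by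
    intro n hn
    rw [prefixList_eq_append, hpos]
    obtain ⟨m, h1', h2'⟩ := hstep n
    rw [h1', h2']
    rw [h1'] at hn
    exact consistent_simp A _ σ hpos ρ hcons m hn
  have hpar : ρ' ∈ ParityObj Ω := hwin.2 ρ' hplay' hcons'
  -- every position from i on has color ≤ 1
  have hle1 : ∀ n, i ≤ n → Ω (ρ' n) ≤ 1 := by
    intro n hn
    have hval : ρ' n = ρ (i + (n - i) % p) := by simp [hρ', show ¬ n < i by omega]
    set q := (n - i) % p with hq
    have hqp : q < p := Nat.mod_lt _ hp0
    rcases Nat.eq_zero_or_pos q with h0 | h0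
    · rw [hval, h0]
      have : ρ (i + 0) = ρ j := by
        rw [show i + 0 = i from rfl]; exact heq
      rw [this]
      have := h2 j hij le_rfl
      have := hcol (ρ j)
      omega
    · rw [hval]
      have := h2 (i + q) (by omega) (by omega)
      have := hcol (ρ (i + q))
      omega
  -- color 1 occurs infinitely often
  obtain ⟨m0, hm0i, hm0j, hm0⟩ := h1
  set q0 := (m0 - i) % p with hq0
  have hq0p : q0 < p := Nat.mod_lt _ hp0
  have hval0 : ρ (i + q0) = ρ m0 := by
    rcases eq_or_lt_of_le hm0j with h | h
    · have : q0 = 0 := by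
        rw [hq0, h]
        simp [hp]
      rw [this]
      rw [show i + 0 = i from rfl, heq, h]
    · have : q0 = m0 - i := by
        rw [hq0]; exact Nat.mod_eq_of_lt (by omega)
      rw [this]
      exact congrArg ρ (by omega)
  have hinf1 : {n | Ω (ρ' n) = 1}.Infinite := by
    apply Set.infinite_of_injective_forall_mem
      (f := fun t : ℕ => i + q0 + t * p)
    · intro a b hab
      simp only at hab
      have : a * p = b * p := by omega
      exact Nat.eq_of_mul_eq_mul_right hp0 this
    · intro t
      have hge : ¬ (i + q0 + t * p < i) := by omega
      have : (i + q0 + t * p - i) % p = q0 := by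
        have : i + q0 + t * p - i = q0 + t * p := by omega
        rw [this, Nat.add_mul_mod_self_right, Nat.mod_eq_of_lt hq0p]
      simp only [Set.mem_setOf_eq, hρ', if_neg hge, this, hval0, hm0]
  obtain ⟨c, hceven, hcinf, hcmax⟩ := hpar
  have hc1 : 1 ≤ c := hcmax 1 hinf1
  have hcle : c ≤ 1 := by
    obtain ⟨n, hn, hni⟩ := hcinf.exists_gt i
    simp only [Set.mem_setOf_eq] at hn
    have := hle1 n hni.le
    omega
  interval_cases c
  simp at hceven

/-- A positional winning strategy for Player 0 in the three-color
parity game is a winning strategy for the recharge game with capacity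
`(|V| - 1) · W`. -/
theorem parity_positional_to_recharge {V : Type} [Fintype V] (A : Arena V)
    (w : V → V → Option ℤ) (Ω : V → ℕ) (W : ℕ)
    (hc : ColoredRecharge A w Ω)
    (hW : ∀ u v, A.E u v → ∀ k : ℤ, w u v = some k → -(W : ℤ) ≤ k)
    (σ : List V → V) (hpos : Positional σ)
    (hwin : A.WinningStrategy A.V0 (ParityObj Ω) σ) :
    A.WinningStrategy A.V0 (Recharge w ((Fintype.card V - 1) * W)) σ := by
  classical
  obtain ⟨hstrat, hwinplay⟩ := hwin
  refine ⟨hstrat, ?_⟩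
  intro ρ hplay hcons n
  by_contra hneg
  push_neg at hneg
  set cap := (Fintype.card V - 1) * W with hcap
  -- last recharge position before n
  set P : ℕ → Prop := fun m => m = 0 ∨ w (ρ (m - 1)) (ρ m) = none with hP
  have hP0 : P 0 := Or.inl rfl
  set r := Nat.findGreatest P n with hr
  have hrn : r ≤ n := Nat.findGreatest_le n
  have hPr : P r := Nat.findGreatest_spec (Nat.zero_le n) hP0
  have hsome : ∀ m, r < m → m ≤ n → ∃ k, w (ρ (m - 1)) (ρ m) = some k := by
    intro m hrm hmn
    have hng : ¬ (m = 0 ∨ w (ρ (m - 1)) (ρ m) = none) :=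
      Nat.findGreatest_is_greatest hrm hmn
    push_neg at hng
    rcases hwv : w (ρ (m - 1)) (ρ m) with _ | k
    · exact absurd hwv hng.2
    · exact ⟨k, rfl⟩
  have hELr : ELcap w cap ρ r = (cap : ℤ) := by
    rcases hPr with h0 | hnone
    · rw [h0]; rfl
    · rcases Nat.eq_zero_or_pos r with h0 | h0
      · rw [h0]; rfl
      · obtain ⟨r', hr'⟩ : ∃ r', r = r' + 1 := ⟨r - 1, by omega⟩
        rw [hr'] at hnone ⊢
        rw [show r' + 1 - 1 = r' from rfl] at hnone
        simp only [ELcap]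
        rw [hnone]
  -- color at the target of a `some`-weighted edge is not 2
  have hnot2 : ∀ m, r < m → m ≤ n → Ω (ρ m) ≠ 2 := by
    intro m hrm hmn hΩ
    obtain ⟨k, hk⟩ := hsome m hrm hmn
    have hedge : A.E (ρ (m - 1)) (ρ m) := by
      have := hplay.2 (m - 1)
      rwa [show m - 1 + 1 = m by omega] at this
    rcases hc (ρ m) with ⟨_, hall⟩ | ⟨h1, _⟩ | ⟨h0, _⟩
    · rw [hall _ hedge] at hk; cases hk
    · omega
    · omega
  -- the energy bound by induction
  have key : ∀ m, r ≤ m → m ≤ n →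
      (cap : ℤ) - (((Finset.Ioc r m).filter fun t => Ω (ρ t) = 1).card : ℤ) * W ≤
        ELcap w cap ρ m := by
    intro m hrm
    induction m, hrm using Nat.le_induction with
    | base => intro _; simp [hELr]
    | succ m hm ih =>
      intro hm1n
      have ihm := ih (by omega)
      obtain ⟨k, hk⟩ := hsome (m + 1) (by omega) hm1n
      rw [show m + 1 - 1 = m from rfl] at hk
      have hEL : ELcap w cap ρ (m + 1) = ELcap w cap ρ m + k := by
        simp only [ELcap, hk]
      have hedge : A.E (ρ m) (ρ (m + 1)) := hplay.2 m
      have hIoc : Finset.Ioc r (m + 1) = insert (m + 1) (Finset.Ioc r m) := by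
        ext x; simp; omega
      have hnotmem : m + 1 ∉ Finset.Ioc r m := by simp
      rcases hc (ρ (m + 1)) with ⟨hΩ, hall⟩ | ⟨hΩ, hall⟩ | ⟨hΩ, hall⟩
      · rw [hall _ hedge] at hk; cases hk
      · obtain ⟨k', hk', hk'neg⟩ := hall _ hedge
        rw [hk] at hk'
        injection hk' with hkk
        subst hkk
        have hkW : -(W : ℤ) ≤ k := hW _ _ hedge k hk
        have hcard : ((Finset.Ioc r (m + 1)).filter fun t => Ω (ρ t) = 1).card =
            ((Finset.Ioc r m).filter fun t => Ω (ρ t) = 1).card + 1 := by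
          rw [hIoc, Finset.filter_insert, if_pos hΩ,
            Finset.card_insert_of_notMem (fun h => hnotmem (Finset.mem_of_mem_filter _ h))]
        rw [hEL, hcard]
        push_cast
        linarith
      · have hk0 : k = 0 := by
          have h0 := hall _ hedge
          rw [hk] at h0
          exact Option.some_inj.mp h0
        have hcard : ((Finset.Ioc r (m + 1)).filter fun t => Ω (ρ t) = 1).card =
            ((Finset.Ioc r m).filter fun t => Ω (ρ t) = 1).card := by
          rw [hIoc, Finset.filter_insert, if_neg (by omega)]
        rw [hEL, hcard, hk0]
        linarith
  -- conclude d ≥ |V|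
  set D := (Finset.Ioc r n).filter fun t => Ω (ρ t) = 1 with hD
  have hbound := key n hrn le_rfl
  have hdW : ((Fintype.card V - 1 : ℕ) : ℤ) * W < (D.card : ℤ) * W := by
    have : (cap : ℤ) = ((Fintype.card V - 1 : ℕ) : ℤ) * W := by
      rw [hcap]; push_cast; ring
    linarith
  have hWpos : 0 < W := by
    by_contra hW0
    have : W = 0 := by omega
    rw [this] at hdW
    simp at hdW
  have hcardV : 1 ≤ Fintype.card V := by
    have : Nonempty V := ⟨ρ 0⟩
    exact Fintype.card_pos
  have hdge : Fintype.card V < D.card + 1 := by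
    have h1 : ((Fintype.card V - 1 : ℕ) : ℤ) < (D.card : ℤ) :=
      lt_of_mul_lt_mul_right hdW (by positivity)
    have := Nat.cast_lt (α := ℤ) |>.mp h1
    omega
  -- pigeonhole
  set T := insert r D with hT
  have hTcard : Fintype.card V < T.card := by
    have : T.card = D.card + 1 := by
      rw [hT, Finset.card_insert_of_notMem]
      intro h
      have := Finset.mem_of_mem_filter _ h
      simp at this
    omega
  obtain ⟨x, hx, y, hy, hxy, hρxy⟩ :=
    Finset.exists_ne_map_eq_of_card_lt_of_maps_to (t := Finset.univ)
      (by simpa using hTcard) (fun a _ => Finset.mem_univ (ρ a))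
  have hmemT : ∀ z, z ∈ T → r ≤ z ∧ z ≤ n := by
    intro z hz
    rw [hT, Finset.mem_insert] at hz
    rcases hz with h | h
    · omega
    · have := Finset.mem_filter.mp h
      simp only [Finset.mem_Ioc] at this
      omega
  have hcol2 : ∀ v, Ω v ≤ 2 := by
    intro v
    rcases hc v with ⟨h, _⟩ | ⟨h, _⟩ | ⟨h, _⟩ <;> omega
  have main : ∀ a b, a ∈ T → b ∈ T → a < b → ρ a = ρ b → False := by
    intro a b ha hb hab habeq
    have hbD : b ∈ D := by
      rw [hT, Finset.mem_insert] at hb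
      rcases hb with h | h
      · exfalso; have := hmemT a ha; omega
      · exact h
    have hbmem := Finset.mem_filter.mp hbD
    simp only [Finset.mem_Ioc] at hbmem
    have haT := hmemT a ha
    refine pump A Ω σ hpos ⟨hstrat, hwinplay⟩ hcol2 ρ hplay hcons a b hab habeq ?_
      ⟨b, hab, le_rfl, hbmem.2⟩
    intro m hm1 hm2
    exact hnot2 m (by omega) (by omega)
  rcases hxy.lt_or_gt with h | h
  · exact main x y hx hy h hρxy
  · exact main y x hy hx h hρxy.symm
end

section
/- Let A be an arena with recharge weight function w such that every vertex is of exactly one of three types: a recharge-vertex (all incoming edges labelled R), a zero-vertex (all incoming edges have weight 0), or a decrement-vertex (all incoming edges have strictly negative weight), and let Ω color recharge-vertices 2, decrement-vertices 1, and zero-vertices 0. If σ is a winning strategy for Player 0 in (A, Recharge(w, cap)) for some cap ∈ ℕ, then σ is a winning strategy for Player 0 in the parity game (A, Parity(Ω)). -/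
/-- A winning strategy for Player 0 in the recharge game (for any
capacity) is also a winning strategy in the three-color parity game. -/
theorem recharge_to_parity {V : Type} [Fintype V] (A : Arena V)
    (w : V → V → Option ℤ) (Ω : V → ℕ)
    (hc : ColoredRecharge A w Ω) (cap : ℕ) (σ : List V → V)
    (hwin : A.WinningStrategy A.V0 (Recharge w cap) σ) :
    A.WinningStrategy A.V0 (ParityObj Ω) σ := by
  obtain ⟨hstr, hwin2⟩ := hwin
  refine ⟨hstr, fun ρ hplay hcons => ?_⟩
  have hre : ∀ n, 0 ≤ ELcap w cap ρ n := hwin2 ρ hplay hcons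
  have hΩ : ∀ v, Ω v = 0 ∨ Ω v = 1 ∨ Ω v = 2 := by
    intro v; rcases hc v with ⟨h, _⟩ | ⟨h, _⟩ | ⟨h, _⟩ <;> omega
  by_cases h2 : {n | Ω (ρ n) = 2}.Infinite
  · refine ⟨2, ⟨1, rfl⟩, h2, fun d hd => ?_⟩
    obtain ⟨n, hn⟩ := hd.nonempty
    rcases hΩ (ρ n) with h | h | h <;> simp only [Set.mem_setOf_eq] at hn <;> omega
  · -- the set of recharge positions is finite; get a bound N
    obtain ⟨N, hN⟩ := (Set.not_infinite.mp h2).bddAbove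
    have hNe : ∀ n, N < n → Ω (ρ n) ≠ 2 := by
      intro n hn h
      exact absurd (hN h) (by omega)
    -- step lemma
    have hstep : ∀ n, N ≤ n → ELcap w cap ρ (n + 1) ≤ ELcap w cap ρ n ∧
        (Ω (ρ (n + 1)) = 1 → ELcap w cap ρ (n + 1) ≤ ELcap w cap ρ n - 1) := by
      intro n hn
      have hE := hplay.2 n
      rcases hc (ρ (n + 1)) with ⟨hΩ1, _⟩ | ⟨hΩ1, hw⟩ | ⟨hΩ1, hw⟩
      · exact absurd hΩ1 (hNe (n + 1) (by omega))
      · obtain ⟨k, hk, hkneg⟩ := hw (ρ n) hE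
        have : ELcap w cap ρ (n + 1) = ELcap w cap ρ n + k := by
          simp [ELcap, hk]
        exact ⟨by omega, fun _ => by omega⟩
      · have hk := hw (ρ n) hE
        have : ELcap w cap ρ (n + 1) = ELcap w cap ρ n + 0 := by
          simp [ELcap, hk]
        constructor
        · omega
        · intro h; omega
    -- monotone after N
    have hmono : ∀ n, N ≤ n → ∀ m, n ≤ m → ELcap w cap ρ m ≤ ELcap w cap ρ n := by
      intro n hn m hm
      induction m, hm using Nat.le_induction with
      | base => exact le_refl _
      | succ m hm ih => exact le_trans (hstep m (by omega)).1 ih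
    -- the set of decrement positions is finite
    have h1 : ¬ {n | Ω (ρ n) = 1}.Infinite := by
      intro hS1
      have hdec : ∀ j : ℕ, ∃ n, N ≤ n ∧ ELcap w cap ρ n ≤ ELcap w cap ρ N - j := by
        intro j
        induction j with
        | zero => exact ⟨N, le_refl _, by simp⟩
        | succ j ih =>
          obtain ⟨n, hn, hle⟩ := ih
          obtain ⟨n', hn'mem, hn'⟩ := hS1.exists_gt n
          obtain ⟨m, rfl⟩ : ∃ m, n' = m + 1 := ⟨n' - 1, by omega⟩
          have h1 := (hstep m (by omega)).2 hn'mem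
          have h2 := hmono n hn m (by omega)
          exact ⟨m + 1, by omega, by push_cast; omega⟩
      obtain ⟨n, _, hle⟩ := hdec (ELcap w cap ρ N + 1).toNat
      have := hre n
      have := hre N
      omega
    -- zero positions are infinite
    have h0 : {n | Ω (ρ n) = 0}.Infinite := by
      have hfin : ({n | Ω (ρ n) = 1} ∪ {n | Ω (ρ n) = 2}).Finite :=
        (Set.not_infinite.mp h1).union (Set.not_infinite.mp h2)
      refine Set.Infinite.mono ?_ hfin.infinite_compl
      intro n hn
      simp only [Set.mem_compl_iff, Set.mem_union, Set.mem_setOf_eq, not_or] at hn ⊢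
      rcases hΩ (ρ n) with h | h | h <;> omega
    refine ⟨0, Even.zero, h0, fun d hd => ?_⟩
    obtain ⟨n, hn⟩ := hd.nonempty
    simp only [Set.mem_setOf_eq] at hn
    rcases hΩ (ρ n) with h | h | h
    · omega
    · exact absurd hd (by rw [show d = 1 by omega]; exact h1)
    · exact absurd hd (by rw [show d = 2 by omega]; exact h2)
end
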